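/- Let P be a finite poset, v ∈ P, and let v₁, …, v_k be the elements of P covered by v. Define T_v* = ε_{v₁} ∘ ε_{v₂} ∘ ⋯ ∘ ε_{v_k} ∘ τ_v ∘ τ_{v_k} ∘ ⋯ ∘ τ_{v₂} ∘ τ_{v₁} and E_v* = ε_{v₁} ∘ ε_{v₂} ∘ ⋯ ∘ ε_{v_k} ∘ ε_v ∘ τ_{v_k} ∘ ⋯ ∘ τ_{v₂} ∘ τ_{v₁} (with T_v* = τ_v and E_v* = ε_v when v is minimal). Then Θ ∘ Δ⁻¹ ∘ T_v* = T_v ∘ Θ ∘ Δ⁻¹ and Θ ∘ Δ⁻¹ ∘ E_v* = E_v ∘ Θ ∘ Δ⁻¹, on all S-labelings for which both sides are defined (i.e., every element inverted in the computation is nonzero). -/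

import Mathlib

/-!
Noncommutative (skew field) antichain/order toggling and rowmotion on a finite poset `P`,
with labels in a division ring `S` and a fixed central element `C`, following
Joseph–Roby, "Birational and noncommutative lifts of antichain toggling and rowmotion".
All maps are partial; definedness ("every element inverted in the computation is
nonzero") is recorded by explicit predicates.
-/

open Finset

attribute [local instance] Classical.propDecidable

variable {P : Type*} [Fintype P] [PartialOrder P] {S : Type*} [DivisionRing S]

/-- `c` is a saturated chain in `P`: consecutive entries are covers. -/
def SatChain {P : Type*} [PartialOrder P] {k : ℕ} (c : Fin (k + 1) → P) : Prop :=
  ∀ i : Fin k, c i.castSucc ⋖ c i.succ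

/-- `c` is a maximal chain of `P`: a saturated chain from a minimal element to a maximal
element of `P` (equivalently, the restriction to `P` of a maximal chain
`0̂ ⋖ y₁ ⋖ ⋯ ⋖ y_k ⋖ 1̂` of `P̂`). -/
def MaxChain {P : Type*} [PartialOrder P] {k : ℕ} (c : Fin (k + 1) → P) : Prop :=
  SatChain c ∧ IsMin (c 0) ∧ IsMax (c (Fin.last k))

/-- `∑_{u ∈ P̂, u ⋖ v} f(u)`, with the convention `f(0̂) = 1`. -/
noncomputable def lSum (f : P → S) (v : P) : S :=
  (if IsMin v then 1 else 0) + ∑ u ∈ univ.filter (fun u => u ⋖ v), f u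

/-- `∑_{u ∈ P̂, u ⋗ v} f(u)⁻¹`, with the convention `f(1̂) = C`; its inverse is the
parallel sum `⫲_{u ∈ P̂, u ⋗ v} f(u)` (where `x ⫲ y = (x⁻¹ + y⁻¹)⁻¹`). -/
noncomputable def uInvSum (C : S) (f : P → S) (v : P) : S :=
  (if IsMax v then C⁻¹ else 0) + ∑ u ∈ univ.filter (fun u => v ⋖ u), (f u)⁻¹

/-- The noncommutative order toggle `T_v`: it replaces the label at `v` by
`(∑_{u ∈ P̂, u ⋖ v} f(u)) · f(v)⁻¹ · (⫲_{u ∈ P̂, u ⋗ v} f(u))` and fixes all other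
labels. -/
noncomputable def ncT (C : S) (v : P) (f : P → S) : P → S :=
  fun x => if x = v then lSum f v * (f v)⁻¹ * (uInvSum C f v)⁻¹ else f x

/-- The noncommutative order elggot `E_v`: it replaces the label at `v` by
`(⫲_{u ∈ P̂, u ⋗ v} f(u)) · f(v)⁻¹ · (∑_{u ∈ P̂, u ⋖ v} f(u))` and fixes all other
labels. -/
noncomputable def ncE (C : S) (v : P) (f : P → S) : P → S :=
  fun x => if x = v then (uInvSum C f v)⁻¹ * (f v)⁻¹ * lSum f v else f x

/-- Definedness of one application of `T_v` or `E_v` to `f`: every element inverted in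
the computation (the label `f(v)`, the labels `f(u)` of the upper covers `u` of `v` in
`P̂`, and the sum of their inverses) is nonzero. -/
def ncODef (C : S) (v : P) (f : P → S) : Prop :=
  f v ≠ 0 ∧ (∀ u : P, v ⋖ u → f u ≠ 0) ∧ (IsMax v → C ≠ 0) ∧ uInvSum C f v ≠ 0

/-- The element `∑ g(y_{c-1})⋯g(y₁) · g(y_k)⋯g(y_c)` inverted by the noncommutative
antichain toggle `τ_v`, summed over all maximal chains `0̂ ⋖ y₁ ⋖ ⋯ ⋖ y_k ⋖ 1̂` of `P̂`
with `y_c = v` (indices decrease by 1 within each factor). -/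
noncomputable def tauDenom (g : P → S) (v : P) : S :=
  ∑ k ∈ range (Fintype.card P),
    ∑ c ∈ univ.filter (fun c : Fin (k + 1) → P => MaxChain c),
      ∑ j ∈ univ.filter (fun j : Fin (k + 1) => c j = v),
        (((List.ofFn (g ∘ c)).take j.1).reverse).prod *
          (((List.ofFn (g ∘ c)).drop j.1).reverse).prod

/-- The element `∑ g(y_c)⋯g(y₁) · g(y_k)⋯g(y_{c+1})` inverted by the noncommutative
antichain elggot `ε_v`, summed over all maximal chains `0̂ ⋖ y₁ ⋖ ⋯ ⋖ y_k ⋖ 1̂` of `P̂`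
with `y_c = v`. -/
noncomputable def epsDenom (g : P → S) (v : P) : S :=
  ∑ k ∈ range (Fintype.card P),
    ∑ c ∈ univ.filter (fun c : Fin (k + 1) → P => MaxChain c),
      ∑ j ∈ univ.filter (fun j : Fin (k + 1) => c j = v),
        (((List.ofFn (g ∘ c)).take (j.1 + 1)).reverse).prod *
          (((List.ofFn (g ∘ c)).drop (j.1 + 1)).reverse).prod

/-- The noncommutative antichain toggle `τ_v`: it replaces the label at `v` by
`C · (∑ g(y_{c-1})⋯g(y₁) · g(y_k)⋯g(y_c))⁻¹` and fixes all other labels. -/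
noncomputable def ncTau (C : S) (v : P) (g : P → S) : P → S :=
  fun x => if x = v then C * (tauDenom g v)⁻¹ else g x

/-- The noncommutative antichain elggot `ε_v`: it replaces the label at `v` by
`C · (∑ g(y_c)⋯g(y₁) · g(y_k)⋯g(y_{c+1}))⁻¹` and fixes all other labels. -/
noncomputable def ncEps (C : S) (v : P) (g : P → S) : P → S :=
  fun x => if x = v then C * (epsDenom g v)⁻¹ else g x

/-- The noncommutative complement `Θ`: `(Θf)(x) = C · f(x)⁻¹`. -/
noncomputable def ncTheta (C : S) (f : P → S) : P → S := fun x => C * (f x)⁻¹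

/-- The noncommutative down transfer `∇`:
`(∇f)(x) = f(x) · (∑_{y ∈ P̂, y ⋖ x} f(y))⁻¹` with `f(0̂) = 1`. -/
noncomputable def ncNabla (f : P → S) : P → S := fun x => f x * (lSum f x)⁻¹

/-- The noncommutative inverse up transfer `Δ⁻¹`:
`(Δ⁻¹f)(x) = ∑ f(y_k)⋯f(y₂)f(y₁)` over all saturated chains
`x = y₁ ⋖ y₂ ⋖ ⋯ ⋖ y_k ⋖ 1̂` in `P̂`. -/
noncomputable def ncDeltaInv (f : P → S) : P → S := fun x =>
  ∑ k ∈ range (Fintype.card P),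
    ∑ c ∈ univ.filter (fun c : Fin (k + 1) → P =>
        SatChain c ∧ c 0 = x ∧ IsMax (c (Fin.last k))),
      ((List.ofFn (f ∘ c)).reverse).prod

/-- The noncommutative inverse down transfer `∇⁻¹`:
`(∇⁻¹f)(x) = ∑ f(y_k)⋯f(y₂)f(y₁)` over all saturated chains
`0̂ ⋖ y₁ ⋖ y₂ ⋖ ⋯ ⋖ y_k = x` in `P̂`. -/
noncomputable def ncNablaInv (f : P → S) : P → S := fun x =>
  ∑ k ∈ range (Fintype.card P),
    ∑ c ∈ univ.filter (fun c : Fin (k + 1) → P =>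
        SatChain c ∧ IsMin (c 0) ∧ c (Fin.last k) = x),
      ((List.ofFn (f ∘ c)).reverse).prod

/-- `l` is a linear extension of `P`: it lists every element of `P` exactly once, and
`l[i] < l[j]` in `P` implies `i < j`. -/
def IsLinearExtension {P : Type*} [PartialOrder P] (l : List P) : Prop :=
  l.Nodup ∧ (∀ x : P, x ∈ l) ∧
    ∀ (i j : ℕ) (hi : i < l.length) (hj : j < l.length), l[i]'hi < l[j]'hj → i < j

/-- `l` is a linear extension of the subposet `A` of `P`. -/
def IsLinearExtensionOn {P : Type*} [PartialOrder P] (A : Set P) (l : List P) : Prop :=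
  l.Nodup ∧ (∀ x : P, x ∈ l ↔ x ∈ A) ∧
    ∀ (i j : ℕ) (hi : i < l.length) (hj : j < l.length), l[i]'hi < l[j]'hj → i < j

/-- Apply the noncommutative antichain toggles `τ` along a list, first element first. -/
noncomputable def applyNCTaus (C : S) (l : List P) (g : P → S) : P → S :=
  l.foldl (fun h v => ncTau C v h) g

/-- Apply the noncommutative antichain elggots `ε` along a list, first element first. -/
noncomputable def applyNCEpss (C : S) (l : List P) (g : P → S) : P → S :=
  l.foldl (fun h v => ncEps C v h) g

/-- Stepwise definedness of applying the antichain toggles `τ` along a list. -/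
def ncTausDef (C : S) : List P → (P → S) → Prop
  | [], _ => True
  | v :: l, g => tauDenom g v ≠ 0 ∧ ncTausDef C l (ncTau C v g)

/-- Stepwise definedness of applying the antichain elggots `ε` along a list. -/
def ncEpssDef (C : S) : List P → (P → S) → Prop
  | [], _ => True
  | v :: l, g => epsDenom g v ≠ 0 ∧ ncEpssDef C l (ncEps C v g)

set_option linter.unusedVariables false
set_option linter.unusedSectionVars false
set_option maxHeartbeats 1000000

lemma SatChain.strictMono {k : ℕ} {c : Fin (k+1) → P} (hc : SatChain c) : StrictMono c :=
  Fin.strictMono_iff_lt_succ.2 fun i => (hc i).lt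

lemma satChain_card {k : ℕ} {c : Fin (k+1) → P} (hc : SatChain c) (x : P)
    (hx : ∀ i, c i ≠ x) : k + 2 ≤ Fintype.card P := by
  classical
  have hinj : Function.Injective c := hc.strictMono.injective
  have h1 : (univ.image c).card = k + 1 := by
    rw [Finset.card_image_of_injective _ hinj, card_univ, Fintype.card_fin]
  have hx' : x ∉ univ.image c := by
    simp only [Finset.mem_image, mem_univ, true_and, not_exists]
    exact fun i => hx i
  have h2 := Finset.card_insert_of_notMem hx'
  have h3 : (insert x (univ.image c)).card ≤ Fintype.card P := by
    rw [← card_univ]; exact Finset.card_le_card (subset_univ _)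
  omega

lemma ncDeltaInv_congr {h h' : P → S} {x : P} (hle : ∀ y, x ≤ y → h y = h' y) :
    ncDeltaInv h x = ncDeltaInv h' x := by
  unfold ncDeltaInv
  refine Finset.sum_congr rfl fun k _ => Finset.sum_congr rfl fun c hc => ?_
  simp only [Finset.mem_filter] at hc
  obtain ⟨-, hsat, h0, -⟩ := hc
  have hfn : h ∘ c = h' ∘ c := by
    funext i
    exact hle _ (h0 ▸ hsat.strictMono.monotone (Fin.zero_le i))
  rw [hfn]

lemma ncNablaInv_congr {h h' : P → S} {x : P} (hle : ∀ y, y ≤ x → h y = h' y) :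
    ncNablaInv h x = ncNablaInv h' x := by
  unfold ncNablaInv
  refine Finset.sum_congr rfl fun k _ => Finset.sum_congr rfl fun c hc => ?_
  simp only [Finset.mem_filter] at hc
  obtain ⟨-, hsat, -, hlast⟩ := hc
  have hfn : h ∘ c = h' ∘ c := by
    funext i
    exact hle _ (hlast ▸ hsat.strictMono.monotone (Fin.le_last i))
  rw [hfn]

lemma ncDeltaInv_rec (h : P → S) (x : P) :
    ncDeltaInv h x =
      ((if IsMax x then (1:S) else 0)
        + ∑ u ∈ univ.filter (fun u => x ⋖ u), ncDeltaInv h u) * h x := by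
  classical
  have : Nonempty P := ⟨x⟩
  obtain ⟨m, hm⟩ : ∃ m, Fintype.card P = m + 1 :=
    ⟨Fintype.card P - 1, by have := Fintype.card_pos (α := P); omega⟩
  have key : ∀ k : ℕ,
      (∑ c ∈ univ.filter (fun c : Fin (k+1+1) → P =>
          SatChain c ∧ c 0 = x ∧ IsMax (c (Fin.last (k+1)))),
        ((List.ofFn (h ∘ c)).reverse).prod)
      = (∑ c ∈ univ.filter (fun c : Fin (k+1) → P =>
          SatChain c ∧ x ⋖ c 0 ∧ IsMax (c (Fin.last k))),
        ((List.ofFn (h ∘ c)).reverse).prod) * h x := by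
    intro k
    rw [Finset.sum_mul]
    refine Finset.sum_nbij' (fun c => c ∘ Fin.succ) (fun c => Fin.cases x c)
      ?_ ?_ ?_ ?_ ?_
    · intro c hc
      simp only [Finset.mem_filter, mem_univ, true_and] at hc ⊢
      obtain ⟨hsat, h0, hmax⟩ := hc
      refine ⟨fun i => ?_, ?_, ?_⟩
      · have := hsat i.succ
        rwa [← Fin.succ_castSucc] at this
      · have := hsat 0
        simpa [h0] using this
      · simpa [Fin.succ_last] using hmax
    · intro c hc
      simp only [Finset.mem_filter, mem_univ, true_and] at hc ⊢
      obtain ⟨hsat, h0, hmax⟩ := hc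
      refine ⟨fun i => ?_, ?_, ?_⟩
      · induction i using Fin.cases with
        | zero => exact h0
        | succ j =>
          have := hsat j
          simpa [← Fin.succ_castSucc] using this
      · simp
      · rw [← Fin.succ_last]
        exact hmax
    · intro c hc
      simp only [Finset.mem_filter, mem_univ, true_and] at hc
      funext i
      induction i using Fin.cases with
      | zero => simp [hc.2.1]
      | succ j => simp
    · intro c _
      funext i
      simp
    · intro c hc
      simp only [Finset.mem_filter, mem_univ, true_and] at hc
      rw [List.ofFn_succ, List.reverse_cons, List.prod_append, List.prod_singleton]
      simp only [Function.comp_apply, hc.2.1]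
      rfl
  have expand : ∀ y : P, ncDeltaInv h y = ∑ k ∈ range (m+1),
      ∑ c ∈ univ.filter (fun c : Fin (k+1) → P =>
        SatChain c ∧ c 0 = y ∧ IsMax (c (Fin.last k))),
      ((List.ofFn (h ∘ c)).reverse).prod := by
    intro y; unfold ncDeltaInv; rw [hm]
  have hA0 : (∑ c ∈ univ.filter (fun c : Fin (0+1) → P =>
      SatChain c ∧ c 0 = x ∧ IsMax (c (Fin.last 0))),
        ((List.ofFn (h ∘ c)).reverse).prod)
      = (if IsMax x then (1:S) else 0) * h x := by
    by_cases hx : IsMax x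
    · have : (univ.filter (fun c : Fin (0+1) → P =>
          SatChain c ∧ c 0 = x ∧ IsMax (c (Fin.last 0)))) = {fun _ => x} := by
        ext c
        simp only [Finset.mem_filter, mem_univ, true_and, Finset.mem_singleton]
        constructor
        · rintro ⟨-, h0, -⟩
          funext i
          have : i = 0 := Fin.ext (by omega)
          rw [this, h0]
        · rintro rfl
          exact ⟨fun i => i.elim0, rfl, hx⟩
      rw [this, Finset.sum_singleton, if_pos hx, one_mul]
      simp [List.ofFn_succ]
    · have : (univ.filter (fun c : Fin (0+1) → P =>
          SatChain c ∧ c 0 = x ∧ IsMax (c (Fin.last 0)))) = ∅ := by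
        ext c
        simp only [Finset.mem_filter, mem_univ, true_and, Finset.notMem_empty, iff_false]
        rintro ⟨-, h0, hmax⟩
        exact hx (by rwa [show (Fin.last 0) = 0 from rfl, h0] at hmax)
      rw [this, Finset.sum_empty, if_neg hx, zero_mul]
  have hmain : (∑ k ∈ range m, ∑ c ∈ univ.filter (fun c : Fin (k+1+1) → P =>
      SatChain c ∧ c 0 = x ∧ IsMax (c (Fin.last (k+1)))),
        ((List.ofFn (h ∘ c)).reverse).prod)
      = (∑ u ∈ univ.filter (fun u => x ⋖ u), ncDeltaInv h u) * h x := by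
    calc (∑ k ∈ range m, ∑ c ∈ univ.filter (fun c : Fin (k+1+1) → P =>
        SatChain c ∧ c 0 = x ∧ IsMax (c (Fin.last (k+1)))),
          ((List.ofFn (h ∘ c)).reverse).prod)
        = ∑ k ∈ range m, (∑ c ∈ univ.filter (fun c : Fin (k+1) → P =>
            SatChain c ∧ x ⋖ c 0 ∧ IsMax (c (Fin.last k))),
          ((List.ofFn (h ∘ c)).reverse).prod) * h x := by
          exact Finset.sum_congr rfl fun k _ => key k
      _ = (∑ k ∈ range m, ∑ c ∈ univ.filter (fun c : Fin (k+1) → P =>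
            SatChain c ∧ x ⋖ c 0 ∧ IsMax (c (Fin.last k))),
          ((List.ofFn (h ∘ c)).reverse).prod) * h x := by
          rw [Finset.sum_mul]
      _ = (∑ u ∈ univ.filter (fun u => x ⋖ u), ncDeltaInv h u) * h x := by
          congr 1
          have hfib : ∀ k : ℕ, (∑ c ∈ univ.filter (fun c : Fin (k+1) → P =>
              SatChain c ∧ x ⋖ c 0 ∧ IsMax (c (Fin.last k))),
                ((List.ofFn (h ∘ c)).reverse).prod)
              = ∑ u ∈ univ.filter (fun u => x ⋖ u),
                  ∑ c ∈ univ.filter (fun c : Fin (k+1) → P =>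
                    SatChain c ∧ c 0 = u ∧ IsMax (c (Fin.last k))),
                    ((List.ofFn (h ∘ c)).reverse).prod := by
            intro k
            rw [← Finset.sum_fiberwise_of_maps_to (g := fun c : Fin (k+1) → P => c 0)
              (t := univ.filter (fun u => x ⋖ u))
              (fun c hc => by
                simp only [Finset.mem_filter, mem_univ, true_and] at hc ⊢
                exact hc.2.1)]
            refine Finset.sum_congr rfl fun u hu => ?_
            simp only [Finset.mem_filter, mem_univ, true_and] at hu
            congr 1
            ext c
            simp only [Finset.mem_filter, mem_univ, true_and]
            constructor
            · rintro ⟨⟨hs, -, hmx⟩, h0⟩; exact ⟨hs, h0, hmx⟩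
            · rintro ⟨hs, h0, hmx⟩; exact ⟨⟨hs, h0 ▸ hu, hmx⟩, h0⟩
          rw [Finset.sum_congr rfl fun k _ => hfib k, Finset.sum_comm]
          refine Finset.sum_congr rfl fun u hu => ?_
          simp only [Finset.mem_filter, mem_univ, true_and] at hu
          unfold ncDeltaInv
          rw [hm, Finset.sum_range_succ]
          have hz : (∑ c ∈ univ.filter (fun c : Fin (m+1) → P =>
              SatChain c ∧ c 0 = u ∧ IsMax (c (Fin.last m))),
                ((List.ofFn (h ∘ c)).reverse).prod) = 0 := by
            refine Finset.sum_eq_zero fun c hc => ?_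
            exfalso
            simp only [Finset.mem_filter, mem_univ, true_and] at hc
            obtain ⟨hs, h0, -⟩ := hc
            have : ∀ i, c i ≠ x := by
              intro i he
              have : u ≤ c i := h0 ▸ hs.strictMono.monotone (Fin.zero_le i)
              rw [he] at this
              exact absurd (lt_of_lt_of_le hu.lt this) (lt_irrefl x)
            have := satChain_card hs x this
            omega
          rw [hz, add_zero]
  rw [expand x, Finset.sum_range_succ', hA0, hmain, add_mul, add_comm]

lemma ncNablaInv_rec (h : P → S) (x : P) :
    ncNablaInv h x = h x * lSum (ncNablaInv h) x := by
  classical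
  have : Nonempty P := ⟨x⟩
  obtain ⟨m, hm⟩ : ∃ m, Fintype.card P = m + 1 :=
    ⟨Fintype.card P - 1, by have := Fintype.card_pos (α := P); omega⟩
  have key : ∀ k : ℕ,
      (∑ c ∈ univ.filter (fun c : Fin (k+1+1) → P =>
          SatChain c ∧ IsMin (c 0) ∧ c (Fin.last (k+1)) = x),
        ((List.ofFn (h ∘ c)).reverse).prod)
      = h x * (∑ c ∈ univ.filter (fun c : Fin (k+1) → P =>
          SatChain c ∧ IsMin (c 0) ∧ c (Fin.last k) ⋖ x),
        ((List.ofFn (h ∘ c)).reverse).prod) := by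
    intro k
    rw [Finset.mul_sum]
    refine Finset.sum_nbij' (fun c => c ∘ Fin.castSucc) (fun c => Fin.snoc c x)
      ?_ ?_ ?_ ?_ ?_
    · intro c hc
      simp only [Finset.mem_filter, mem_univ, true_and] at hc ⊢
      obtain ⟨hsat, h0, hlast⟩ := hc
      refine ⟨fun i => ?_, ?_, ?_⟩
      · have := hsat i.castSucc
        rwa [Fin.succ_castSucc] at this
      · simpa using h0
      · have := hsat (Fin.last k)
        rwa [Fin.succ_last, hlast] at this
    · intro c hc
      simp only [Finset.mem_filter, mem_univ, true_and] at hc ⊢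
      obtain ⟨hsat, h0, hlast⟩ := hc
      refine ⟨fun i => ?_, ?_, ?_⟩
      · induction i using Fin.lastCases with
        | last =>
          rw [Fin.succ_last, Fin.snoc_last, Fin.snoc_castSucc]
          exact hlast
        | cast j =>
          rw [Fin.succ_castSucc, Fin.snoc_castSucc, Fin.snoc_castSucc]
          exact hsat j
      · rw [show (0 : Fin (k+1+1)) = (0 : Fin (k+1)).castSucc by simp, Fin.snoc_castSucc]
        exact h0
      · rw [Fin.snoc_last]
    · intro c hc
      simp only [Finset.mem_filter, mem_univ, true_and] at hc
      funext i
      induction i using Fin.lastCases with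
      | last => simp [hc.2.2]
      | cast j => simp
    · intro c _
      funext i
      simp
    · intro c hc
      simp only [Finset.mem_filter, mem_univ, true_and] at hc
      rw [List.ofFn_succ', List.concat_eq_append, List.reverse_concat, List.prod_cons]
      simp only [Function.comp_apply, hc.2.2]
      rfl
  have expand : ∀ y : P, ncNablaInv h y = ∑ k ∈ range (m+1),
      ∑ c ∈ univ.filter (fun c : Fin (k+1) → P =>
        SatChain c ∧ IsMin (c 0) ∧ c (Fin.last k) = y),
      ((List.ofFn (h ∘ c)).reverse).prod := by
    intro y; unfold ncNablaInv; rw [hm]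
  have hA0 : (∑ c ∈ univ.filter (fun c : Fin (0+1) → P =>
      SatChain c ∧ IsMin (c 0) ∧ c (Fin.last 0) = x),
        ((List.ofFn (h ∘ c)).reverse).prod)
      = h x * (if IsMin x then (1:S) else 0) := by
    by_cases hx : IsMin x
    · have : (univ.filter (fun c : Fin (0+1) → P =>
          SatChain c ∧ IsMin (c 0) ∧ c (Fin.last 0) = x)) = {fun _ => x} := by
        ext c
        simp only [Finset.mem_filter, mem_univ, true_and, Finset.mem_singleton]
        constructor
        · rintro ⟨-, -, h0⟩
          funext i
          have : i = Fin.last 0 := Fin.ext (by omega)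
          rw [this, h0]
        · rintro rfl
          exact ⟨fun i => i.elim0, hx, rfl⟩
      rw [this, Finset.sum_singleton, if_pos hx, mul_one]
      simp [List.ofFn_succ]
    · have : (univ.filter (fun c : Fin (0+1) → P =>
          SatChain c ∧ IsMin (c 0) ∧ c (Fin.last 0) = x)) = ∅ := by
        ext c
        simp only [Finset.mem_filter, mem_univ, true_and, Finset.notMem_empty, iff_false]
        rintro ⟨-, h0, hl⟩
        exact hx (by rwa [show (0 : Fin (0+1)) = Fin.last 0 from rfl, hl] at h0)
      rw [this, Finset.sum_empty, if_neg hx, mul_zero]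
  have hmain : (∑ k ∈ range m, ∑ c ∈ univ.filter (fun c : Fin (k+1+1) → P =>
      SatChain c ∧ IsMin (c 0) ∧ c (Fin.last (k+1)) = x),
        ((List.ofFn (h ∘ c)).reverse).prod)
      = h x * (∑ u ∈ univ.filter (fun u => u ⋖ x), ncNablaInv h u) := by
    calc (∑ k ∈ range m, ∑ c ∈ univ.filter (fun c : Fin (k+1+1) → P =>
        SatChain c ∧ IsMin (c 0) ∧ c (Fin.last (k+1)) = x),
          ((List.ofFn (h ∘ c)).reverse).prod)
        = ∑ k ∈ range m, h x * (∑ c ∈ univ.filter (fun c : Fin (k+1) → P =>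
            SatChain c ∧ IsMin (c 0) ∧ c (Fin.last k) ⋖ x),
          ((List.ofFn (h ∘ c)).reverse).prod) := by
          exact Finset.sum_congr rfl fun k _ => key k
      _ = h x * (∑ k ∈ range m, ∑ c ∈ univ.filter (fun c : Fin (k+1) → P =>
            SatChain c ∧ IsMin (c 0) ∧ c (Fin.last k) ⋖ x),
          ((List.ofFn (h ∘ c)).reverse).prod) := by
          rw [Finset.mul_sum]
      _ = h x * (∑ u ∈ univ.filter (fun u => u ⋖ x), ncNablaInv h u) := by
          congr 1
          have hfib : ∀ k : ℕ, (∑ c ∈ univ.filter (fun c : Fin (k+1) → P =>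
              SatChain c ∧ IsMin (c 0) ∧ c (Fin.last k) ⋖ x),
                ((List.ofFn (h ∘ c)).reverse).prod)
              = ∑ u ∈ univ.filter (fun u => u ⋖ x),
                  ∑ c ∈ univ.filter (fun c : Fin (k+1) → P =>
                    SatChain c ∧ IsMin (c 0) ∧ c (Fin.last k) = u),
                    ((List.ofFn (h ∘ c)).reverse).prod := by
            intro k
            rw [← Finset.sum_fiberwise_of_maps_to (g := fun c : Fin (k+1) → P => c (Fin.last k))
              (t := univ.filter (fun u => u ⋖ x))
              (fun c hc => by
                simp only [Finset.mem_filter, mem_univ, true_and] at hc ⊢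
                exact hc.2.2)]
            refine Finset.sum_congr rfl fun u hu => ?_
            simp only [Finset.mem_filter, mem_univ, true_and] at hu
            congr 1
            ext c
            simp only [Finset.mem_filter, mem_univ, true_and]
            constructor
            · rintro ⟨⟨hs, hmn, -⟩, h0⟩; exact ⟨hs, hmn, h0⟩
            · rintro ⟨hs, hmn, h0⟩; exact ⟨⟨hs, hmn, h0 ▸ hu⟩, h0⟩
          rw [Finset.sum_congr rfl fun k _ => hfib k, Finset.sum_comm]
          refine Finset.sum_congr rfl fun u hu => ?_
          simp only [Finset.mem_filter, mem_univ, true_and] at hu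
          unfold ncNablaInv
          rw [hm, Finset.sum_range_succ]
          have hz : (∑ c ∈ univ.filter (fun c : Fin (m+1) → P =>
              SatChain c ∧ IsMin (c 0) ∧ c (Fin.last m) = u),
                ((List.ofFn (h ∘ c)).reverse).prod) = 0 := by
            refine Finset.sum_eq_zero fun c hc => ?_
            exfalso
            simp only [Finset.mem_filter, mem_univ, true_and] at hc
            obtain ⟨hs, -, h0⟩ := hc
            have : ∀ i, c i ≠ x := by
              intro i he
              have : c i ≤ u := h0 ▸ hs.strictMono.monotone (Fin.le_last i)
              rw [he] at this
              exact absurd (lt_of_le_of_lt this hu.lt) (lt_irrefl x)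
            have := satChain_card hs x this
            omega
          rw [hz, add_zero]
  rw [expand x, Finset.sum_range_succ', hA0, hmain, lSum, mul_add, add_comm]


section Flat

variable [Nonempty P]

/-- value of `d` at clamped index `i`. -/
noncomputable def ix (d : Fin (Fintype.card P) → P) (i : ℕ) : P :=
  d ⟨min i (Fintype.card P - 1), by have := Fintype.card_pos (α := P); omega⟩

def PaddedN (k : ℕ) (d : Fin (Fintype.card P) → P) : Prop :=
  ∀ i, k ≤ i → ix d i = ix d k

def ChainN (k : ℕ) (d : Fin (Fintype.card P) → P) : Prop :=
  ∀ i, i < k → ix d i ⋖ ix d (i+1)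

lemma ix_val {d : Fin (Fintype.card P) → P} {i : ℕ} (hi : i < Fintype.card P) :
    ix d i = d ⟨i, hi⟩ := by
  unfold ix; congr 1; exact Fin.ext (by simp; omega)

lemma ix_fin {d : Fin (Fintype.card P) → P} (i : Fin (Fintype.card P)) :
    ix d i.1 = d i := by
  rw [ix_val i.isLt]

noncomputable def lowp (m : ℕ) (d : Fin (Fintype.card P) → P) : Fin (Fintype.card P) → P :=
  fun i => ix d (min i.1 (m-1))

noncomputable def highp (k m : ℕ) (d : Fin (Fintype.card P) → P) : Fin (Fintype.card P) → P :=
  fun i => ix d (min (m + i.1) k)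

noncomputable def glue (k₁ : ℕ) (b a : Fin (Fintype.card P) → P) : Fin (Fintype.card P) → P :=
  fun i => if i.1 ≤ k₁ then ix b i.1 else ix a (i.1 - (k₁+1))

lemma ix_lowp {m : ℕ} {d : Fin (Fintype.card P) → P} (hm : m - 1 ≤ Fintype.card P - 1)
    (j : ℕ) : ix (lowp m d) j = ix d (min j (m-1)) := by
  have hc := Fintype.card_pos (α := P)
  rw [show ix (lowp m d) j = ix d (min (min j (Fintype.card P - 1)) (m-1)) from rfl]
  congr 1; omega

lemma ix_highp {k m : ℕ} {d : Fin (Fintype.card P) → P} (hk : k ≤ Fintype.card P - 1)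
    (j : ℕ) : ix (highp k m d) j = ix d (min (m + j) k) := by
  have hc := Fintype.card_pos (α := P)
  rw [show ix (highp k m d) j = ix d (min (m + min j (Fintype.card P - 1)) k) from rfl]
  congr 1; omega

lemma ix_glue_low {k₁ : ℕ} {b a : Fin (Fintype.card P) → P} (hk₁ : k₁ ≤ Fintype.card P - 1)
    {j : ℕ} (hj : j ≤ k₁) : ix (glue k₁ b a) j = ix b j := by
  have hc := Fintype.card_pos (α := P)
  have h1 : min j (Fintype.card P - 1) = j := by omega
  rw [show ix (glue k₁ b a) j = glue k₁ b a ⟨min j (Fintype.card P - 1), by omega⟩ from rfl]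
  unfold glue
  simp only [h1]
  rw [if_pos hj]

lemma ix_glue_high {k₁ k₂ : ℕ} {b a : Fin (Fintype.card P) → P} (ha : PaddedN k₂ a)
    (hk : k₁ + k₂ + 1 ≤ Fintype.card P - 1) {j : ℕ} (hj : k₁ < j) :
    ix (glue k₁ b a) j = ix a (min (j - (k₁+1)) k₂) := by
  have hc := Fintype.card_pos (α := P)
  set j' := min j (Fintype.card P - 1) with hj'
  have hj'k : k₁ < j' := by omega
  rw [show ix (glue k₁ b a) j = glue k₁ b a ⟨j', by omega⟩ from rfl]
  unfold glue
  simp only []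
  rw [if_neg (by omega)]
  by_cases hcase : j - (k₁+1) ≤ k₂
  · have h1 : j' - (k₁+1) = j - (k₁+1) := by omega
    have h2 : min (j - (k₁+1)) k₂ = j - (k₁+1) := by omega
    rw [h1, h2]
  · have h1 : k₂ ≤ j' - (k₁+1) := by omega
    have h2 : min (j - (k₁+1)) k₂ = k₂ := by omega
    rw [h2, ha _ h1]

lemma chainN_lt {k : ℕ} {d : Fin (Fintype.card P) → P} (h : ChainN k d) :
    ∀ j, j ≤ k → ∀ i, i < j → ix d i < ix d j := by
  intro j
  induction j with
  | zero => omega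
  | succ j ih =>
    intro hj i hi
    rcases Nat.lt_succ_iff_lt_or_eq.1 hi with hi' | rfl
    · exact lt_trans (ih (by omega) i hi') ((h j (by omega)).lt)
    · exact (h i (by omega)).lt

lemma chainN_le {k : ℕ} {d : Fin (Fintype.card P) → P} (h : ChainN k d)
    {i j : ℕ} (hij : i ≤ j) (hj : j ≤ k) : ix d i ≤ ix d j := by
  rcases Nat.lt_or_ge i j with h' | h'
  · exact (chainN_lt h j hj i h').le
  · have : i = j := by omega
    rw [this]

lemma chain_chain_card {k₁ k₂ : ℕ} {b a : Fin (Fintype.card P) → P} (hb : ChainN k₁ b)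
    (ha : ChainN k₂ a) (hcov : ix b k₁ < ix a 0) : k₁ + k₂ + 2 ≤ Fintype.card P := by
  classical
  have hinj : Function.Injective
      (Sum.elim (fun i : Fin (k₁+1) => ix b i.1) (fun i : Fin (k₂+1) => ix a i.1)) := by
    have hblt : ∀ i : Fin (k₁+1), ix b i.1 ≤ ix b k₁ :=
      fun i => chainN_le hb (by omega) le_rfl
    have halt : ∀ i : Fin (k₂+1), ix a 0 ≤ ix a i.1 :=
      fun i => chainN_le ha (by omega) (by omega)
    rintro (i|i) (j|j) hij <;> simp only [Sum.elim_inl, Sum.elim_inr] at hij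
    · congr 1
      refine Fin.ext ?_
      rcases lt_trichotomy i.1 j.1 with h'|h'|h'
      · exact absurd hij (ne_of_lt (chainN_lt hb j.1 (by omega) i.1 h'))
      · exact h'
      · exact absurd hij.symm (ne_of_lt (chainN_lt hb i.1 (by omega) j.1 h'))
    · exact absurd hij (ne_of_lt (lt_of_le_of_lt (hblt i) (lt_of_lt_of_le hcov (halt j))))
    · exact absurd hij.symm (ne_of_lt (lt_of_le_of_lt (hblt j) (lt_of_lt_of_le hcov (halt i))))
    · congr 1
      refine Fin.ext ?_
      rcases lt_trichotomy i.1 j.1 with h'|h'|h'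
      · exact absurd hij (ne_of_lt (chainN_lt ha j.1 (by omega) i.1 h'))
      · exact h'
      · exact absurd hij.symm (ne_of_lt (chainN_lt ha i.1 (by omega) j.1 h'))
  have := Fintype.card_le_of_injective _ hinj
  simp only [Fintype.card_sum, Fintype.card_fin] at this
  omega

lemma master (F : ℕ → (Fin (Fintype.card P) → P) → ℕ → (Fin (Fintype.card P) → P) → S) :
    ∑ q ∈ ((range (Fintype.card P)) ×ˢ (univ : Finset (Fin (Fintype.card P) → P))
        ×ˢ range (Fintype.card P + 1)).filter
        (fun q => PaddedN q.1 q.2.1 ∧ ChainN q.1 q.2.1 ∧ IsMin (ix q.2.1 0)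
          ∧ IsMax (ix q.2.1 q.1) ∧ 1 ≤ q.2.2 ∧ q.2.2 ≤ q.1),
      F (q.2.2 - 1) (lowp q.2.2 q.2.1) (q.1 - q.2.2) (highp q.1 q.2.2 q.2.1)
    = ∑ q ∈ ((range (Fintype.card P)) ×ˢ (univ : Finset (Fin (Fintype.card P) → P))
        ×ˢ (range (Fintype.card P)) ×ˢ (univ : Finset (Fin (Fintype.card P) → P))).filter
        (fun q => PaddedN q.1 q.2.1 ∧ ChainN q.1 q.2.1 ∧ IsMin (ix q.2.1 0)
          ∧ PaddedN q.2.2.1 q.2.2.2 ∧ ChainN q.2.2.1 q.2.2.2 ∧ IsMax (ix q.2.2.2 q.2.2.1)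
          ∧ ix q.2.1 q.1 ⋖ ix q.2.2.2 0),
      F q.1 q.2.1 q.2.2.1 q.2.2.2 := by
  classical
  have hc := Fintype.card_pos (α := P)
  refine Finset.sum_nbij'
    (fun q => (q.2.2 - 1, lowp q.2.2 q.2.1, q.1 - q.2.2, highp q.1 q.2.2 q.2.1))
    (fun q => (q.1 + q.2.2.1 + 1, glue q.1 q.2.1 q.2.2.2, q.1 + 1))
    ?_ ?_ ?_ ?_ ?_
  · rintro ⟨k, d, m⟩ hq
    simp only [Finset.mem_filter, Finset.mem_product, mem_univ, Finset.mem_range, true_and, and_true] at hq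
    obtain ⟨⟨hkn, hmn⟩, hpad, hch, hmin, hmax, hm1, hmk⟩ := hq
    have hkn' : k ≤ Fintype.card P - 1 := by omega
    have hm1' : m - 1 ≤ Fintype.card P - 1 := by omega
    simp only [Finset.mem_filter, Finset.mem_product, mem_univ, Finset.mem_range, true_and, and_true]
    refine ⟨⟨by omega, by omega⟩, ?_, ?_, ?_, ?_, ?_, ?_, ?_⟩
    · intro i hi
      rw [ix_lowp hm1', ix_lowp hm1']
      congr 1; omega
    · intro i hi
      rw [ix_lowp hm1', ix_lowp hm1', show min i (m-1) = i by omega,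
        show min (i+1) (m-1) = i + 1 by omega]
      exact hch i (by omega)
    · rwa [ix_lowp hm1', show min 0 (m-1) = 0 by omega]
    · intro i hi
      rw [ix_highp hkn', ix_highp hkn']
      congr 1; omega
    · intro i hi
      rw [ix_highp hkn', ix_highp hkn', show min (m+i) k = m + i by omega,
        show min (m+(i+1)) k = m + i + 1 by omega]
      exact hch (m+i) (by omega)
    · rwa [ix_highp hkn', show min (m + (k - m)) k = k by omega]
    · rw [ix_lowp hm1', ix_highp hkn', show min (m-1) (m-1) = m - 1 by omega,
        show min (m+0) k = (m-1)+1 by omega]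
      exact hch (m-1) (by omega)
  · rintro ⟨k₁, b, k₂, a⟩ hq
    simp only [Finset.mem_filter, Finset.mem_product, mem_univ, Finset.mem_range, true_and, and_true] at hq
    obtain ⟨⟨hk₁n, hk₂n⟩, hpb, hcb, hmin, hpa, hca, hmax, hcov⟩ := hq
    have hcard := chain_chain_card hcb hca hcov.lt
    have hkn' : k₁ + k₂ + 1 ≤ Fintype.card P - 1 := by omega
    have hk₁' : k₁ ≤ Fintype.card P - 1 := by omega
    simp only [Finset.mem_filter, Finset.mem_product, mem_univ, Finset.mem_range, true_and, and_true]
    refine ⟨⟨by omega, by omega⟩, ?_, ?_, ?_, ?_, by omega, by omega⟩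
    · intro i hi
      rw [ix_glue_high hpa hkn' (by omega), ix_glue_high hpa hkn' (by omega)]
      congr 1; omega
    · intro i hi
      rcases Nat.lt_or_ge i k₁ with h'|h'
      · rw [ix_glue_low hk₁' (by omega), ix_glue_low hk₁' (by omega)]
        exact hcb i h'
      by_cases heq : i = k₁
      · subst heq
        rw [ix_glue_low hk₁' le_rfl, ix_glue_high hpa hkn' (by omega),
          show min (i+1-(i+1)) k₂ = 0 by omega]
        exact hcov
      have h'' : k₁ < i := by omega
      · rw [ix_glue_high hpa hkn' (by omega), ix_glue_high hpa hkn' (by omega),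
          show min (i-(k₁+1)) k₂ = i - (k₁+1) by omega,
          show min (i+1-(k₁+1)) k₂ = i - (k₁+1) + 1 by omega]
        exact hca (i - (k₁+1)) (by omega)
    · rwa [ix_glue_low hk₁' (by omega)]
    · rwa [ix_glue_high hpa hkn' (by omega),
        show min (k₁ + k₂ + 1 - (k₁+1)) k₂ = k₂ by omega]
  · rintro ⟨k, d, m⟩ hq
    simp only [Finset.mem_filter, Finset.mem_product, mem_univ, Finset.mem_range, true_and, and_true] at hq
    obtain ⟨⟨hkn, hmn⟩, hpad, hch, hmin, hmax, hm1, hmk⟩ := hq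
    have hkn' : k ≤ Fintype.card P - 1 := by omega
    have hm1' : m - 1 ≤ Fintype.card P - 1 := by omega
    simp only [Prod.mk.injEq]
    refine ⟨by omega, ?_, by omega⟩
    funext i
    show glue (m-1) (lowp m d) (highp k m d) i = d i
    unfold glue
    by_cases hi : i.1 ≤ m - 1
    · rw [if_pos hi, ix_lowp hm1', show min i.1 (m-1) = i.1 by omega, ix_fin]
    · rw [if_neg hi, ix_highp hkn']
      have : m - 1 + 1 = m := by omega
      rw [this]
      by_cases hik : i.1 ≤ k
      · rw [show min (m + (i.1 - m)) k = i.1 by omega, ix_fin]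
      · rw [show min (m + (i.1 - m)) k = k by omega, ← hpad i.1 (by omega), ix_fin]
  · rintro ⟨k₁, b, k₂, a⟩ hq
    simp only [Finset.mem_filter, Finset.mem_product, mem_univ, Finset.mem_range, true_and, and_true] at hq
    obtain ⟨⟨hk₁n, hk₂n⟩, hpb, hcb, hmin, hpa, hca, hmax, hcov⟩ := hq
    have hcard := chain_chain_card hcb hca hcov.lt
    have hkn' : k₁ + k₂ + 1 ≤ Fintype.card P - 1 := by omega
    have hk₁' : k₁ ≤ Fintype.card P - 1 := by omega
    simp only [Prod.mk.injEq]
    refine ⟨by omega, ?_, by omega, ?_⟩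
    · funext i
      show lowp (k₁+1) (glue k₁ b a) i = b i
      unfold lowp
      rw [show k₁ + 1 - 1 = k₁ by omega, ix_glue_low hk₁' (by omega)]
      by_cases hi : i.1 ≤ k₁
      · rw [show min i.1 k₁ = i.1 by omega, ix_fin]
      · rw [show min i.1 k₁ = k₁ by omega, ← hpb i.1 (by omega), ix_fin]
    · funext i
      show highp (k₁ + k₂ + 1) (k₁+1) (glue k₁ b a) i = a i
      unfold highp
      rw [ix_glue_high hpa hkn' (by omega)]
      have harg : min (min (k₁ + 1 + i.1) (k₁ + k₂ + 1) - (k₁+1)) k₂ = min i.1 k₂ := by omega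
      rw [harg]
      by_cases hi : i.1 ≤ k₂
      · rw [show min i.1 k₂ = i.1 by omega, ix_fin]
      · rw [show min i.1 k₂ = k₂ by omega, ← hpa i.1 (by omega), ix_fin]
  · rintro ⟨k, d, m⟩ _
    rfl

end Flat

section Pad
variable [Nonempty P]

noncomputable def resk (k : ℕ) (hk : k < Fintype.card P) (d : Fin (Fintype.card P) → P) :
    Fin (k+1) → P :=
  fun i => d ⟨i.1, by have := i.isLt; omega⟩

noncomputable def extk (k : ℕ) (hk : k < Fintype.card P) (c : Fin (k+1) → P) :
    Fin (Fintype.card P) → P :=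
  fun i => c ⟨min i.1 k, by omega⟩

lemma resk_eq_ix {k : ℕ} (hk : k < Fintype.card P) (d : Fin (Fintype.card P) → P)
    (i : Fin (k+1)) : resk k hk d i = ix d i.1 := by
  have := i.isLt
  rw [ix_val (by omega)]
  rfl

lemma ix_extk {k : ℕ} (hk : k < Fintype.card P) (c : Fin (k+1) → P) (j : ℕ) :
    ix (extk k hk c) j = c ⟨min j k, by omega⟩ := by
  have hc := Fintype.card_pos (α := P)
  rw [show ix (extk k hk c) j = c ⟨min (min j (Fintype.card P - 1)) k, by omega⟩ from rfl]
  congr 1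
  exact Fin.ext (by simp; omega)

lemma resk_extk {k : ℕ} (hk : k < Fintype.card P) (c : Fin (k+1) → P) :
    resk k hk (extk k hk c) = c := by
  funext i
  have := i.isLt
  show c ⟨min i.1 k, _⟩ = c i
  congr 1
  exact Fin.ext (by simp; omega)

lemma padded_extk {k : ℕ} (hk : k < Fintype.card P) (c : Fin (k+1) → P) :
    PaddedN k (extk k hk c) := by
  intro i hi
  rw [ix_extk, ix_extk]
  congr 1
  exact Fin.ext (by simp; omega)

lemma extk_resk {k : ℕ} (hk : k < Fintype.card P) {d : Fin (Fintype.card P) → P}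
    (hp : PaddedN k d) : extk k hk (resk k hk d) = d := by
  funext i
  have hi := i.isLt
  show d ⟨min i.1 k, _⟩ = d i
  by_cases hik : i.1 ≤ k
  · congr 1; exact Fin.ext (by simp; omega)
  · have := hp i.1 (by omega)
    rw [ix_val hi, ix_val hk] at this
    rw [show (⟨min i.1 k, by omega⟩ : Fin (Fintype.card P)) = ⟨k, hk⟩ from Fin.ext (by simp; omega),
      this]

lemma padsum {k : ℕ} (hk : k < Fintype.card P) (Q : (Fin (k+1) → P) → Prop)
    (F : (Fin (k+1) → P) → S) :
    ∑ c ∈ univ.filter Q, F c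
      = ∑ d ∈ univ.filter (fun d : Fin (Fintype.card P) → P =>
          PaddedN k d ∧ Q (resk k hk d)), F (resk k hk d) := by
  classical
  refine Finset.sum_nbij' (fun c => extk k hk c) (fun d => resk k hk d) ?_ ?_ ?_ ?_ ?_
  · intro c hcm
    simp only [Finset.mem_filter, mem_univ, true_and] at hcm ⊢
    exact ⟨padded_extk hk c, by rwa [resk_extk hk c]⟩
  · intro d hd
    simp only [Finset.mem_filter, mem_univ, true_and] at hd ⊢
    exact hd.2
  · intro c _
    exact resk_extk hk c
  · intro d hd
    simp only [Finset.mem_filter, mem_univ, true_and] at hd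
    exact extk_resk hk hd.1
  · intro c _
    rw [resk_extk hk c]

lemma satChain_resk {k : ℕ} (hk : k < Fintype.card P) (d : Fin (Fintype.card P) → P) :
    SatChain (resk k hk d) ↔ ChainN k d := by
  constructor
  · intro H i hi
    have := H ⟨i, hi⟩
    rwa [resk_eq_ix, resk_eq_ix] at this
  · intro H i
    rw [resk_eq_ix, resk_eq_ix]
    exact H i.1 i.isLt

lemma resk_zero {k : ℕ} (hk : k < Fintype.card P) (d : Fin (Fintype.card P) → P) :
    resk k hk d 0 = ix d 0 := resk_eq_ix hk d 0

lemma resk_last {k : ℕ} (hk : k < Fintype.card P) (d : Fin (Fintype.card P) → P) :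
    resk k hk d (Fin.last k) = ix d k := resk_eq_ix hk d (Fin.last k)

lemma comp_resk {k : ℕ} (hk : k < Fintype.card P) (d : Fin (Fintype.card P) → P)
    (h : P → S) : h ∘ resk k hk d = fun i : Fin (k+1) => h (ix d i.1) := by
  funext i
  rw [Function.comp_apply, resk_eq_ix]

lemma ncDeltaInv_flat (h : P → S) (x : P) :
    ncDeltaInv h x = ∑ k ∈ range (Fintype.card P),
      ∑ d ∈ univ.filter (fun d : Fin (Fintype.card P) → P =>
          PaddedN k d ∧ ChainN k d ∧ ix d 0 = x ∧ IsMax (ix d k)),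
        ((List.ofFn (fun i : Fin (k+1) => h (ix d i.1))).reverse).prod := by
  unfold ncDeltaInv
  refine Finset.sum_congr rfl fun k hk => ?_
  have hk' : k < Fintype.card P := mem_range.1 hk
  have hps := padsum hk' (fun c => SatChain c ∧ c 0 = x ∧ IsMax (c (Fin.last k)))
    (fun c => ((List.ofFn (h ∘ c)).reverse).prod)
  have e : (univ.filter (fun c : Fin (k+1) → P => SatChain c ∧ c 0 = x ∧ IsMax (c (Fin.last k))))
      = @Finset.filter _ (fun c : Fin (k+1) → P => SatChain c ∧ c 0 = x ∧ IsMax (c (Fin.last k)))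
          (fun a => Classical.propDecidable _) univ := by
    ext c; simp only [Finset.mem_filter]
  rw [e]
  refine hps.trans ?_
  refine Finset.sum_congr ?_ fun d hd => by rw [comp_resk]
  ext d
  simp only [Finset.mem_filter, mem_univ, true_and]
  rw [satChain_resk hk', resk_zero hk', resk_last hk']

lemma ncNablaInv_flat (h : P → S) (x : P) :
    ncNablaInv h x = ∑ k ∈ range (Fintype.card P),
      ∑ d ∈ univ.filter (fun d : Fin (Fintype.card P) → P =>
          PaddedN k d ∧ ChainN k d ∧ IsMin (ix d 0) ∧ ix d k = x),
        ((List.ofFn (fun i : Fin (k+1) => h (ix d i.1))).reverse).prod := by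
  unfold ncNablaInv
  refine Finset.sum_congr rfl fun k hk => ?_
  have hk' : k < Fintype.card P := mem_range.1 hk
  have hps := padsum hk' (fun c => SatChain c ∧ IsMin (c 0) ∧ c (Fin.last k) = x)
    (fun c => ((List.ofFn (h ∘ c)).reverse).prod)
  have e : (univ.filter (fun c : Fin (k+1) → P => SatChain c ∧ IsMin (c 0) ∧ c (Fin.last k) = x))
      = @Finset.filter _ (fun c : Fin (k+1) → P => SatChain c ∧ IsMin (c 0) ∧ c (Fin.last k) = x)
          (fun a => Classical.propDecidable _) univ := by
    ext c; simp only [Finset.mem_filter]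
  rw [e]
  refine hps.trans ?_
  refine Finset.sum_congr ?_ fun d hd => by rw [comp_resk]
  ext d
  simp only [Finset.mem_filter, mem_univ, true_and]
  rw [satChain_resk hk', resk_zero hk', resk_last hk']

end Pad

section L34
variable [Nonempty P]

noncomputable def lprod (h : P → S) (k : ℕ) (d : Fin (Fintype.card P) → P) : S :=
  ((List.ofFn (fun i : Fin (k+1) => h (ix d i.1))).reverse).prod

noncomputable def tauF (h : P → S) (v : P) :
    ℕ → (Fin (Fintype.card P) → P) → ℕ → (Fin (Fintype.card P) → P) → S :=
  fun k₁ b k₂ a => if ix a 0 = v then lprod h k₁ b * lprod h k₂ a else 0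

noncomputable def epsF (h : P → S) (v : P) :
    ℕ → (Fin (Fintype.card P) → P) → ℕ → (Fin (Fintype.card P) → P) → S :=
  fun k₁ b k₂ a => if ix b k₁ = v then lprod h k₁ b * lprod h k₂ a else 0

lemma maxChain_resk {k : ℕ} (hk : k < Fintype.card P) (d : Fin (Fintype.card P) → P) :
    MaxChain (resk k hk d) ↔ ChainN k d ∧ IsMin (ix d 0) ∧ IsMax (ix d k) := by
  unfold MaxChain
  rw [satChain_resk hk, resk_zero hk, resk_last hk]

lemma take_flat (h : P → S) {k m : ℕ} (d : Fin (Fintype.card P) → P) (h1 : 1 ≤ m)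
    (hmk : m ≤ k) (hk : k ≤ Fintype.card P - 1) :
    (List.ofFn (fun i : Fin (k+1) => h (ix d i.1))).take m
      = List.ofFn (fun i : Fin ((m-1)+1) => h (ix (lowp m d) i.1)) := by
  have hm1 : m - 1 ≤ Fintype.card P - 1 := by omega
  refine List.ext_getElem ?_ fun i hi1 hi2 => ?_
  · simp [List.length_take, List.length_ofFn]; omega
  · rw [List.getElem_take, List.getElem_ofFn, List.getElem_ofFn]
    simp only []
    rw [ix_lowp hm1]
    congr 2
    simp only [List.length_take, List.length_ofFn] at hi1 hi2
    omega

lemma drop_flat (h : P → S) {k m : ℕ} (d : Fin (Fintype.card P) → P)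
    (hmk : m ≤ k) (hk : k ≤ Fintype.card P - 1) :
    (List.ofFn (fun i : Fin (k+1) => h (ix d i.1))).drop m
      = List.ofFn (fun i : Fin ((k-m)+1) => h (ix (highp k m d) i.1)) := by
  refine List.ext_getElem ?_ fun i hi1 hi2 => ?_
  · simp [List.length_drop, List.length_ofFn]; omega
  · rw [List.getElem_drop, List.getElem_ofFn, List.getElem_ofFn]
    simp only []
    rw [ix_highp hk]
    congr 2
    simp only [List.length_drop, List.length_ofFn] at hi1 hi2
    omega

end L34

section L3
variable [Nonempty P]

lemma inner_flat (h : P → S) (v : P) {k : ℕ} (hk : k < Fintype.card P)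
    (d : Fin (Fintype.card P) → P) :
    (∑ j : Fin (k+1), if (resk k hk d j = v ∧ j.1 ≠ 0) then
        (((List.ofFn (h ∘ resk k hk d)).take j.1).reverse).prod *
          (((List.ofFn (h ∘ resk k hk d)).drop j.1).reverse).prod else 0)
      = ∑ m ∈ range (Fintype.card P + 1),
          if (1 ≤ m ∧ m ≤ k ∧ ix d m = v) then
            tauF h v (m-1) (lowp m d) (k-m) (highp k m d) else 0 := by
  have hc := Fintype.card_pos (α := P)
  have hkn : k ≤ Fintype.card P - 1 := by omega
  have e1 : ∀ j : Fin (k+1), (if (resk k hk d j = v ∧ j.1 ≠ 0) then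
      (((List.ofFn (h ∘ resk k hk d)).take j.1).reverse).prod *
        (((List.ofFn (h ∘ resk k hk d)).drop j.1).reverse).prod else 0)
      = (fun m : ℕ => if (1 ≤ m ∧ m ≤ k ∧ ix d m = v) then
          tauF h v (m-1) (lowp m d) (k-m) (highp k m d) else 0) j.1 := by
    intro j
    have hjk : j.1 < k + 1 := j.isLt
    simp only []
    rw [resk_eq_ix hk d j, comp_resk hk d h]
    by_cases hx : ix d j.1 = v ∧ j.1 ≠ 0
    · rw [if_pos hx, if_pos ⟨by omega, by omega, hx.1⟩,
        take_flat h d (by omega) (by omega) hkn, drop_flat h d (by omega) hkn]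
      unfold tauF
      rw [if_pos (by rw [ix_highp hkn, show min (j.1+0) k = j.1 by omega]; exact hx.1)]
      rfl
    · rw [if_neg hx, if_neg (fun hy => hx ⟨hy.2.2, by omega⟩)]
  rw [Finset.sum_congr rfl (fun j _ => e1 j)]
  refine (Fin.sum_univ_eq_sum_range (fun m : ℕ => if (1 ≤ m ∧ m ≤ k ∧ ix d m = v) then
    tauF h v (m-1) (lowp m d) (k-m) (highp k m d) else 0) (k+1)).trans ?_
  refine Finset.sum_subset (Finset.range_subset_range.2 (by omega)) (fun m _ hm => if_neg ?_)
  rw [Finset.mem_range] at hm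
  rintro ⟨-, h2, -⟩
  omega

lemma part1_eq (h : P → S) (v : P) :
    (∑ k ∈ range (Fintype.card P),
      ∑ c ∈ univ.filter (fun c : Fin (k+1) → P => MaxChain c),
        ∑ j : Fin (k+1), if (c j = v ∧ j.1 ≠ 0) then
          (((List.ofFn (h ∘ c)).take j.1).reverse).prod *
            (((List.ofFn (h ∘ c)).drop j.1).reverse).prod else 0)
    = ∑ q ∈ ((range (Fintype.card P)) ×ˢ (univ : Finset (Fin (Fintype.card P) → P))
        ×ˢ range (Fintype.card P + 1)).filter
        (fun q => PaddedN q.1 q.2.1 ∧ ChainN q.1 q.2.1 ∧ IsMin (ix q.2.1 0)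
          ∧ IsMax (ix q.2.1 q.1) ∧ 1 ≤ q.2.2 ∧ q.2.2 ≤ q.1),
      tauF h v (q.2.2 - 1) (lowp q.2.2 q.2.1) (q.1 - q.2.2) (highp q.1 q.2.2 q.2.1) := by
  have hc := Fintype.card_pos (α := P)
  have hR : (∑ q ∈ ((range (Fintype.card P)) ×ˢ (univ : Finset (Fin (Fintype.card P) → P))
        ×ˢ range (Fintype.card P + 1)).filter
        (fun q => PaddedN q.1 q.2.1 ∧ ChainN q.1 q.2.1 ∧ IsMin (ix q.2.1 0)
          ∧ IsMax (ix q.2.1 q.1) ∧ 1 ≤ q.2.2 ∧ q.2.2 ≤ q.1),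
      tauF h v (q.2.2 - 1) (lowp q.2.2 q.2.1) (q.1 - q.2.2) (highp q.1 q.2.2 q.2.1))
      = ∑ k ∈ range (Fintype.card P), ∑ d ∈ (univ : Finset (Fin (Fintype.card P) → P)),
          ∑ m ∈ range (Fintype.card P + 1),
            if (PaddedN k d ∧ ChainN k d ∧ IsMin (ix d 0) ∧ IsMax (ix d k) ∧ 1 ≤ m ∧ m ≤ k)
            then tauF h v (m-1) (lowp m d) (k-m) (highp k m d) else 0 := by
    rw [Finset.sum_filter, Finset.sum_product]
    refine Finset.sum_congr rfl fun k _ => ?_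
    rw [Finset.sum_product]
  rw [hR]
  refine Finset.sum_congr rfl fun k hkm => ?_
  have hk' : k < Fintype.card P := Finset.mem_range.1 hkm
  have hkn : k ≤ Fintype.card P - 1 := by omega
  rw [padsum hk' (fun c => MaxChain c)
    (fun c => ∑ j : Fin (k+1), if (c j = v ∧ j.1 ≠ 0) then
      (((List.ofFn (h ∘ c)).take j.1).reverse).prod *
        (((List.ofFn (h ∘ c)).drop j.1).reverse).prod else 0),
    Finset.sum_filter]
  refine Finset.sum_congr rfl fun d _ => ?_
  rw [inner_flat h v hk' d]
  by_cases hP : PaddedN k d ∧ ChainN k d ∧ IsMin (ix d 0) ∧ IsMax (ix d k)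
  · rw [if_pos ⟨hP.1, (maxChain_resk hk' d).2 hP.2⟩]
    refine Finset.sum_congr rfl fun m _ => ?_
    by_cases hm1 : 1 ≤ m ∧ m ≤ k
    · by_cases hv : ix d m = v
      · rw [if_pos ⟨hm1.1, hm1.2, hv⟩, if_pos ⟨hP.1, hP.2.1, hP.2.2.1, hP.2.2.2, hm1.1, hm1.2⟩]
      · rw [if_neg (fun hy => hv hy.2.2),
          if_pos ⟨hP.1, hP.2.1, hP.2.2.1, hP.2.2.2, hm1.1, hm1.2⟩]
        unfold tauF
        rw [if_neg (fun hy => hv (by rwa [ix_highp hkn, show min (m+0) k = m by omega] at hy))]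
    · rw [if_neg (fun hy => hm1 ⟨hy.1, hy.2.1⟩),
        if_neg (fun hy => hm1 ⟨hy.2.2.2.2.1, hy.2.2.2.2.2⟩)]
  · rw [if_neg (fun hy => hP ⟨hy.1, (maxChain_resk hk' d).1 hy.2⟩)]
    symm
    refine Finset.sum_eq_zero fun m _ => if_neg (fun hy => hP ⟨hy.1, hy.2.1, hy.2.2.1, hy.2.2.2.1⟩)

lemma part1_rhs (h : P → S) (v : P) :
    (∑ q ∈ ((range (Fintype.card P)) ×ˢ (univ : Finset (Fin (Fintype.card P) → P))
        ×ˢ (range (Fintype.card P)) ×ˢ (univ : Finset (Fin (Fintype.card P) → P))).filter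
        (fun q => PaddedN q.1 q.2.1 ∧ ChainN q.1 q.2.1 ∧ IsMin (ix q.2.1 0)
          ∧ PaddedN q.2.2.1 q.2.2.2 ∧ ChainN q.2.2.1 q.2.2.2 ∧ IsMax (ix q.2.2.2 q.2.2.1)
          ∧ ix q.2.1 q.1 ⋖ ix q.2.2.2 0),
      tauF h v q.1 q.2.1 q.2.2.1 q.2.2.2)
    = (∑ u ∈ univ.filter (fun u => u ⋖ v), ncNablaInv h u) * ncDeltaInv h v := by
  have hstep : (∑ q ∈ ((range (Fintype.card P)) ×ˢ (univ : Finset (Fin (Fintype.card P) → P))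
        ×ˢ (range (Fintype.card P)) ×ˢ (univ : Finset (Fin (Fintype.card P) → P))).filter
        (fun q => PaddedN q.1 q.2.1 ∧ ChainN q.1 q.2.1 ∧ IsMin (ix q.2.1 0)
          ∧ PaddedN q.2.2.1 q.2.2.2 ∧ ChainN q.2.2.1 q.2.2.2 ∧ IsMax (ix q.2.2.2 q.2.2.1)
          ∧ ix q.2.1 q.1 ⋖ ix q.2.2.2 0),
      tauF h v q.1 q.2.1 q.2.2.1 q.2.2.2)
      = ∑ k₁ ∈ range (Fintype.card P), ∑ b ∈ (univ : Finset (Fin (Fintype.card P) → P)),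
          (if (PaddedN k₁ b ∧ ChainN k₁ b ∧ IsMin (ix b 0) ∧ ix b k₁ ⋖ v)
            then lprod h k₁ b else 0) *
          (∑ k₂ ∈ range (Fintype.card P), ∑ a ∈ (univ : Finset (Fin (Fintype.card P) → P)),
            (if (PaddedN k₂ a ∧ ChainN k₂ a ∧ ix a 0 = v ∧ IsMax (ix a k₂))
              then lprod h k₂ a else 0)) := by
    rw [Finset.sum_filter, Finset.sum_product]
    refine Finset.sum_congr rfl fun k₁ _ => ?_
    rw [Finset.sum_product]
    refine Finset.sum_congr rfl fun b _ => ?_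
    rw [Finset.mul_sum]
    rw [Finset.sum_product]
    refine Finset.sum_congr rfl fun k₂ _ => ?_
    rw [Finset.mul_sum]
    refine Finset.sum_congr rfl fun a _ => ?_
    simp only []
    unfold tauF
    by_cases hb : PaddedN k₁ b ∧ ChainN k₁ b ∧ IsMin (ix b 0)
    · by_cases ha : PaddedN k₂ a ∧ ChainN k₂ a ∧ IsMax (ix a k₂)
      · by_cases hv0 : ix a 0 = v
        · by_cases hcov : ix b k₁ ⋖ ix a 0
          · rw [if_pos ⟨hb.1, hb.2.1, hb.2.2, ha.1, ha.2.1, ha.2.2, hcov⟩, if_pos hv0,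
              if_pos ⟨hb.1, hb.2.1, hb.2.2, hv0 ▸ hcov⟩, if_pos ⟨ha.1, ha.2.1, hv0, ha.2.2⟩]
          · have hL0 : (if (PaddedN k₁ b ∧ ChainN k₁ b ∧ IsMin (ix b 0) ∧ ix b k₁ ⋖ v)
                then lprod h k₁ b else 0) = 0 :=
              if_neg (fun hy => hcov (by rw [hv0]; exact hy.2.2.2))
            rw [if_neg (fun hy => hcov hy.2.2.2.2.2.2), hL0, zero_mul]
        · have hR0 : (if (PaddedN k₂ a ∧ ChainN k₂ a ∧ ix a 0 = v ∧ IsMax (ix a k₂))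
              then lprod h k₂ a else 0) = 0 := if_neg (fun hy => hv0 hy.2.2.1)
          rw [hR0, mul_zero]
          by_cases hcov : ix b k₁ ⋖ ix a 0
          · rw [if_pos ⟨hb.1, hb.2.1, hb.2.2, ha.1, ha.2.1, ha.2.2, hcov⟩, if_neg hv0]
          · rw [if_neg (fun hy => hcov hy.2.2.2.2.2.2)]
      · have hR0 : (if (PaddedN k₂ a ∧ ChainN k₂ a ∧ ix a 0 = v ∧ IsMax (ix a k₂))
            then lprod h k₂ a else 0) = 0 :=
          if_neg (fun hy => ha ⟨hy.1, hy.2.1, hy.2.2.2⟩)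
        rw [if_neg (fun hy => ha ⟨hy.2.2.2.1, hy.2.2.2.2.1, hy.2.2.2.2.2.1⟩), hR0, mul_zero]
    · have hL0 : (if (PaddedN k₁ b ∧ ChainN k₁ b ∧ IsMin (ix b 0) ∧ ix b k₁ ⋖ v)
          then lprod h k₁ b else 0) = 0 :=
        if_neg (fun hy => hb ⟨hy.1, hy.2.1, hy.2.2.1⟩)
      rw [if_neg (fun hy => hb ⟨hy.1, hy.2.1, hy.2.2.1⟩), hL0, zero_mul]
  rw [hstep]
  have hD : (∑ k₂ ∈ range (Fintype.card P), ∑ a ∈ (univ : Finset (Fin (Fintype.card P) → P)),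
      (if (PaddedN k₂ a ∧ ChainN k₂ a ∧ ix a 0 = v ∧ IsMax (ix a k₂))
        then lprod h k₂ a else 0)) = ncDeltaInv h v := by
    rw [ncDeltaInv_flat h v]
    refine Finset.sum_congr rfl fun k₂ _ => ?_
    rw [Finset.sum_filter]
    rfl
  rw [hD]
  have hfac : ∀ k₁ ∈ range (Fintype.card P),
      (∑ b ∈ (univ : Finset (Fin (Fintype.card P) → P)),
        (if (PaddedN k₁ b ∧ ChainN k₁ b ∧ IsMin (ix b 0) ∧ ix b k₁ ⋖ v)
          then lprod h k₁ b else 0) * ncDeltaInv h v)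
      = (∑ b ∈ (univ : Finset (Fin (Fintype.card P) → P)),
          (if (PaddedN k₁ b ∧ ChainN k₁ b ∧ IsMin (ix b 0) ∧ ix b k₁ ⋖ v)
            then lprod h k₁ b else 0)) * ncDeltaInv h v := fun k₁ _ => (Finset.sum_mul _ _ _).symm
  rw [Finset.sum_congr rfl hfac, ← Finset.sum_mul]
  congr 1
  have hXb : ∀ (k₁ : ℕ) (b : Fin (Fintype.card P) → P),
      (if (PaddedN k₁ b ∧ ChainN k₁ b ∧ IsMin (ix b 0) ∧ ix b k₁ ⋖ v)
        then lprod h k₁ b else 0)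
      = ∑ u ∈ univ.filter (fun u => u ⋖ v),
          (if (PaddedN k₁ b ∧ ChainN k₁ b ∧ IsMin (ix b 0) ∧ ix b k₁ = u)
            then lprod h k₁ b else 0) := by
    intro k₁ b
    by_cases hb : PaddedN k₁ b ∧ ChainN k₁ b ∧ IsMin (ix b 0)
    · have e : ∀ u : P, ((PaddedN k₁ b ∧ ChainN k₁ b ∧ IsMin (ix b 0) ∧ ix b k₁ = u) : Prop)
          ↔ (ix b k₁ = u) :=
        fun u => ⟨fun hy => hy.2.2.2, fun hy => ⟨hb.1, hb.2.1, hb.2.2, hy⟩⟩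
      rw [Finset.sum_congr rfl (fun u _ => if_congr (e u) rfl rfl), Finset.sum_ite_eq]
      simp only [Finset.mem_filter, Finset.mem_univ, true_and]
      by_cases hcv : ix b k₁ ⋖ v
      · rw [if_pos hcv, if_pos ⟨hb.1, hb.2.1, hb.2.2, hcv⟩]
      · rw [if_neg hcv, if_neg (fun hy => hcv hy.2.2.2)]
    · rw [if_neg (fun hy => hb ⟨hy.1, hy.2.1, hy.2.2.1⟩)]
      symm
      exact Finset.sum_eq_zero fun u _ => if_neg (fun hy => hb ⟨hy.1, hy.2.1, hy.2.2.1⟩)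
  rw [Finset.sum_congr rfl fun k₁ _ => Finset.sum_congr rfl fun b _ => hXb k₁ b,
    Finset.sum_congr rfl fun k₁ _ => Finset.sum_comm, Finset.sum_comm]
  refine Finset.sum_congr rfl fun u _ => ?_
  rw [ncNablaInv_flat h u]
  refine Finset.sum_congr rfl fun k₁ _ => ?_
  rw [Finset.sum_filter]
  rfl

lemma tau_split (h : P → S) (v : P) :
    tauDenom h v
      = (∑ k ∈ range (Fintype.card P),
          ∑ c ∈ univ.filter (fun c : Fin (k+1) → P => MaxChain c),
            (if c 0 = v then ((List.ofFn (h ∘ c)).reverse).prod else 0))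
        + (∑ k ∈ range (Fintype.card P),
            ∑ c ∈ univ.filter (fun c : Fin (k+1) → P => MaxChain c),
              ∑ j : Fin (k+1), if (c j = v ∧ j.1 ≠ 0) then
                (((List.ofFn (h ∘ c)).take j.1).reverse).prod *
                  (((List.ofFn (h ∘ c)).drop j.1).reverse).prod else 0) := by
  unfold tauDenom
  rw [← Finset.sum_add_distrib]
  refine Finset.sum_congr rfl fun k _ => ?_
  rw [← Finset.sum_add_distrib]
  refine Finset.sum_congr rfl fun c _ => ?_
  rw [Finset.sum_filter]
  have e : ∀ j : Fin (k+1), (if c j = v then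
      (((List.ofFn (h ∘ c)).take j.1).reverse).prod *
        (((List.ofFn (h ∘ c)).drop j.1).reverse).prod else 0)
      = (if (c j = v ∧ j.1 = 0) then
          (((List.ofFn (h ∘ c)).take j.1).reverse).prod *
            (((List.ofFn (h ∘ c)).drop j.1).reverse).prod else 0)
        + (if (c j = v ∧ j.1 ≠ 0) then
            (((List.ofFn (h ∘ c)).take j.1).reverse).prod *
              (((List.ofFn (h ∘ c)).drop j.1).reverse).prod else 0) := by
    intro j
    by_cases h1 : c j = v
    · by_cases h2 : j.1 = 0
      · rw [if_pos h1, if_pos ⟨h1, h2⟩, if_neg (fun hy => hy.2 h2), add_zero]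
      · rw [if_pos h1, if_neg (fun hy => h2 hy.2), if_pos ⟨h1, h2⟩, zero_add]
    · rw [if_neg h1, if_neg (fun hy => h1 hy.1), if_neg (fun hy => h1 hy.1), add_zero]
  rw [Finset.sum_congr rfl (fun j _ => e j), Finset.sum_add_distrib]
  congr 1
  rw [Finset.sum_eq_single_of_mem (0 : Fin (k+1)) (mem_univ _)
    (fun j _ hj => if_neg (fun hy => hj (Fin.ext hy.2)))]
  by_cases h0 : c 0 = v
  · rw [if_pos ⟨h0, rfl⟩, if_pos h0]
    simp
  · rw [if_neg (fun hy => h0 hy.1), if_neg h0]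

lemma part0_eq (h : P → S) (v : P) :
    (∑ k ∈ range (Fintype.card P), ∑ c ∈ univ.filter (fun c : Fin (k+1) → P => MaxChain c),
       (if c 0 = v then ((List.ofFn (h ∘ c)).reverse).prod else 0))
    = (if IsMin v then (1:S) else 0) * ncDeltaInv h v := by
  by_cases hmin : IsMin v
  · rw [if_pos hmin, one_mul]
    unfold ncDeltaInv
    refine Finset.sum_congr rfl fun k _ => ?_
    rw [Finset.sum_filter, Finset.sum_filter]
    refine Finset.sum_congr rfl fun c _ => ?_
    by_cases h1 : SatChain c <;> by_cases h2 : c 0 = v <;>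
      by_cases h3 : IsMax (c (Fin.last k)) <;>
      simp [MaxChain, h1, h2, h3, hmin]
  · rw [if_neg hmin, zero_mul]
    refine Finset.sum_eq_zero fun k _ => Finset.sum_eq_zero fun c hcm => ?_
    rw [Finset.mem_filter] at hcm
    exact if_neg (fun h0 : c 0 = v => hmin (h0 ▸ hcm.2.2.1))

lemma tauDenom_eq (h : P → S) (v : P) :
    tauDenom h v = lSum (ncNablaInv h) v * ncDeltaInv h v := by
  rw [tau_split h v, part0_eq h v, part1_eq h v, master (tauF h v), part1_rhs h v]
  unfold lSum
  rw [add_mul]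

end L3

section L4
variable [Nonempty P]

lemma inner_flat_eps (h : P → S) (v : P) {k : ℕ} (hk : k < Fintype.card P)
    (d : Fin (Fintype.card P) → P) :
    (∑ j : Fin (k+1), if (resk k hk d j = v ∧ j.1 ≠ k) then
        (((List.ofFn (h ∘ resk k hk d)).take (j.1+1)).reverse).prod *
          (((List.ofFn (h ∘ resk k hk d)).drop (j.1+1)).reverse).prod else 0)
      = ∑ m ∈ range (Fintype.card P + 1),
          if (1 ≤ m ∧ m ≤ k ∧ ix d (m-1) = v) then
            epsF h v (m-1) (lowp m d) (k-m) (highp k m d) else 0 := by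
  have hc := Fintype.card_pos (α := P)
  have hkn : k ≤ Fintype.card P - 1 := by omega
  have e1 : ∀ j : Fin (k+1), (if (resk k hk d j = v ∧ j.1 ≠ k) then
      (((List.ofFn (h ∘ resk k hk d)).take (j.1+1)).reverse).prod *
        (((List.ofFn (h ∘ resk k hk d)).drop (j.1+1)).reverse).prod else 0)
      = (fun m : ℕ => if (1 ≤ m ∧ m ≤ k ∧ ix d (m-1) = v) then
          epsF h v (m-1) (lowp m d) (k-m) (highp k m d) else 0) (j.1 + 1) := by
    intro j
    have hjk : j.1 < k + 1 := j.isLt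
    simp only []
    rw [resk_eq_ix hk d j, comp_resk hk d h]
    by_cases hx : ix d j.1 = v ∧ j.1 ≠ k
    · rw [if_pos hx, if_pos ⟨by omega, by omega, by rw [show j.1 + 1 - 1 = j.1 by omega]; exact hx.1⟩,
        take_flat h d (by omega) (by omega) hkn, drop_flat h d (by omega) hkn]
      unfold epsF
      rw [if_pos (by
        rw [ix_lowp (by omega), show min (j.1+1-1) (j.1+1-1) = j.1 by omega]
        exact hx.1)]
      rfl
    · rw [if_neg hx, if_neg (fun hy => hx ⟨by
        have := hy.2.2
        rwa [show j.1 + 1 - 1 = j.1 by omega] at this, by omega⟩)]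
  rw [Finset.sum_congr rfl (fun j _ => e1 j)]
  refine ((Fin.sum_univ_eq_sum_range (fun m : ℕ => (fun m : ℕ => if (1 ≤ m ∧ m ≤ k ∧ ix d (m-1) = v) then
    epsF h v (m-1) (lowp m d) (k-m) (highp k m d) else 0) (m + 1)) (k+1))).trans ?_
  have hshift := Finset.sum_range_succ' (fun m : ℕ => if (1 ≤ m ∧ m ≤ k ∧ ix d (m-1) = v) then
    epsF h v (m-1) (lowp m d) (k-m) (highp k m d) else 0) (k+1)
  rw [if_neg (by omega : ¬(1 ≤ 0 ∧ 0 ≤ k ∧ ix d (0-1) = v)), add_zero] at hshift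
  refine hshift.symm.trans ?_
  refine Finset.sum_subset (Finset.range_subset_range.2 (by omega)) (fun m _ hm => if_neg ?_)
  rw [Finset.mem_range] at hm
  rintro ⟨-, h2, -⟩
  omega

lemma part1_eq_eps (h : P → S) (v : P) :
    (∑ k ∈ range (Fintype.card P),
      ∑ c ∈ univ.filter (fun c : Fin (k+1) → P => MaxChain c),
        ∑ j : Fin (k+1), if (c j = v ∧ j.1 ≠ k) then
          (((List.ofFn (h ∘ c)).take (j.1+1)).reverse).prod *
            (((List.ofFn (h ∘ c)).drop (j.1+1)).reverse).prod else 0)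
    = ∑ q ∈ ((range (Fintype.card P)) ×ˢ (univ : Finset (Fin (Fintype.card P) → P))
        ×ˢ range (Fintype.card P + 1)).filter
        (fun q => PaddedN q.1 q.2.1 ∧ ChainN q.1 q.2.1 ∧ IsMin (ix q.2.1 0)
          ∧ IsMax (ix q.2.1 q.1) ∧ 1 ≤ q.2.2 ∧ q.2.2 ≤ q.1),
      epsF h v (q.2.2 - 1) (lowp q.2.2 q.2.1) (q.1 - q.2.2) (highp q.1 q.2.2 q.2.1) := by
  have hc := Fintype.card_pos (α := P)
  have hR : (∑ q ∈ ((range (Fintype.card P)) ×ˢ (univ : Finset (Fin (Fintype.card P) → P))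
        ×ˢ range (Fintype.card P + 1)).filter
        (fun q => PaddedN q.1 q.2.1 ∧ ChainN q.1 q.2.1 ∧ IsMin (ix q.2.1 0)
          ∧ IsMax (ix q.2.1 q.1) ∧ 1 ≤ q.2.2 ∧ q.2.2 ≤ q.1),
      epsF h v (q.2.2 - 1) (lowp q.2.2 q.2.1) (q.1 - q.2.2) (highp q.1 q.2.2 q.2.1))
      = ∑ k ∈ range (Fintype.card P), ∑ d ∈ (univ : Finset (Fin (Fintype.card P) → P)),
          ∑ m ∈ range (Fintype.card P + 1),
            if (PaddedN k d ∧ ChainN k d ∧ IsMin (ix d 0) ∧ IsMax (ix d k) ∧ 1 ≤ m ∧ m ≤ k)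
            then epsF h v (m-1) (lowp m d) (k-m) (highp k m d) else 0 := by
    rw [Finset.sum_filter, Finset.sum_product]
    refine Finset.sum_congr rfl fun k _ => ?_
    rw [Finset.sum_product]
  rw [hR]
  refine Finset.sum_congr rfl fun k hkm => ?_
  have hk' : k < Fintype.card P := Finset.mem_range.1 hkm
  have hkn : k ≤ Fintype.card P - 1 := by omega
  rw [padsum hk' (fun c => MaxChain c)
    (fun c => ∑ j : Fin (k+1), if (c j = v ∧ j.1 ≠ k) then
      (((List.ofFn (h ∘ c)).take (j.1+1)).reverse).prod *
        (((List.ofFn (h ∘ c)).drop (j.1+1)).reverse).prod else 0),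
    Finset.sum_filter]
  refine Finset.sum_congr rfl fun d _ => ?_
  rw [inner_flat_eps h v hk' d]
  by_cases hP : PaddedN k d ∧ ChainN k d ∧ IsMin (ix d 0) ∧ IsMax (ix d k)
  · rw [if_pos ⟨hP.1, (maxChain_resk hk' d).2 hP.2⟩]
    refine Finset.sum_congr rfl fun m _ => ?_
    by_cases hm1 : 1 ≤ m ∧ m ≤ k
    · by_cases hv : ix d (m-1) = v
      · rw [if_pos ⟨hm1.1, hm1.2, hv⟩, if_pos ⟨hP.1, hP.2.1, hP.2.2.1, hP.2.2.2, hm1.1, hm1.2⟩]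
      · rw [if_neg (fun hy => hv hy.2.2),
          if_pos ⟨hP.1, hP.2.1, hP.2.2.1, hP.2.2.2, hm1.1, hm1.2⟩]
        unfold epsF
        rw [if_neg (fun hy => hv (by
          rwa [ix_lowp (by omega), show min (m-1) (m-1) = m-1 by omega] at hy))]
    · rw [if_neg (fun hy => hm1 ⟨hy.1, hy.2.1⟩),
        if_neg (fun hy => hm1 ⟨hy.2.2.2.2.1, hy.2.2.2.2.2⟩)]
  · rw [if_neg (fun hy => hP ⟨hy.1, (maxChain_resk hk' d).1 hy.2⟩)]
    symm
    refine Finset.sum_eq_zero fun m _ => if_neg (fun hy => hP ⟨hy.1, hy.2.1, hy.2.2.1, hy.2.2.2.1⟩)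

lemma part1_rhs_eps (h : P → S) (v : P) :
    (∑ q ∈ ((range (Fintype.card P)) ×ˢ (univ : Finset (Fin (Fintype.card P) → P))
        ×ˢ (range (Fintype.card P)) ×ˢ (univ : Finset (Fin (Fintype.card P) → P))).filter
        (fun q => PaddedN q.1 q.2.1 ∧ ChainN q.1 q.2.1 ∧ IsMin (ix q.2.1 0)
          ∧ PaddedN q.2.2.1 q.2.2.2 ∧ ChainN q.2.2.1 q.2.2.2 ∧ IsMax (ix q.2.2.2 q.2.2.1)
          ∧ ix q.2.1 q.1 ⋖ ix q.2.2.2 0),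
      epsF h v q.1 q.2.1 q.2.2.1 q.2.2.2)
    = ncNablaInv h v * (∑ u ∈ univ.filter (fun u => v ⋖ u), ncDeltaInv h u) := by
  have hstep : (∑ q ∈ ((range (Fintype.card P)) ×ˢ (univ : Finset (Fin (Fintype.card P) → P))
        ×ˢ (range (Fintype.card P)) ×ˢ (univ : Finset (Fin (Fintype.card P) → P))).filter
        (fun q => PaddedN q.1 q.2.1 ∧ ChainN q.1 q.2.1 ∧ IsMin (ix q.2.1 0)
          ∧ PaddedN q.2.2.1 q.2.2.2 ∧ ChainN q.2.2.1 q.2.2.2 ∧ IsMax (ix q.2.2.2 q.2.2.1)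
          ∧ ix q.2.1 q.1 ⋖ ix q.2.2.2 0),
      epsF h v q.1 q.2.1 q.2.2.1 q.2.2.2)
      = ∑ k₁ ∈ range (Fintype.card P), ∑ b ∈ (univ : Finset (Fin (Fintype.card P) → P)),
          (if (PaddedN k₁ b ∧ ChainN k₁ b ∧ IsMin (ix b 0) ∧ ix b k₁ = v)
            then lprod h k₁ b else 0) *
          (∑ k₂ ∈ range (Fintype.card P), ∑ a ∈ (univ : Finset (Fin (Fintype.card P) → P)),
            (if (PaddedN k₂ a ∧ ChainN k₂ a ∧ IsMax (ix a k₂) ∧ v ⋖ ix a 0)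
              then lprod h k₂ a else 0)) := by
    rw [Finset.sum_filter, Finset.sum_product]
    refine Finset.sum_congr rfl fun k₁ _ => ?_
    rw [Finset.sum_product]
    refine Finset.sum_congr rfl fun b _ => ?_
    rw [Finset.mul_sum]
    rw [Finset.sum_product]
    refine Finset.sum_congr rfl fun k₂ _ => ?_
    rw [Finset.mul_sum]
    refine Finset.sum_congr rfl fun a _ => ?_
    simp only []
    unfold epsF
    by_cases hb : PaddedN k₁ b ∧ ChainN k₁ b ∧ IsMin (ix b 0)
    · by_cases ha : PaddedN k₂ a ∧ ChainN k₂ a ∧ IsMax (ix a k₂)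
      · by_cases hv0 : ix b k₁ = v
        · by_cases hcov : ix b k₁ ⋖ ix a 0
          · rw [if_pos ⟨hb.1, hb.2.1, hb.2.2, ha.1, ha.2.1, ha.2.2, hcov⟩, if_pos hv0,
              if_pos ⟨hb.1, hb.2.1, hb.2.2, hv0⟩,
              if_pos ⟨ha.1, ha.2.1, ha.2.2, hv0 ▸ hcov⟩]
          · have hR0 : (if (PaddedN k₂ a ∧ ChainN k₂ a ∧ IsMax (ix a k₂) ∧ v ⋖ ix a 0)
                then lprod h k₂ a else 0) = 0 :=
              if_neg (fun hy => hcov (by rw [hv0]; exact hy.2.2.2))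
            rw [if_neg (fun hy => hcov hy.2.2.2.2.2.2), hR0, mul_zero]
        · have hL0 : (if (PaddedN k₁ b ∧ ChainN k₁ b ∧ IsMin (ix b 0) ∧ ix b k₁ = v)
              then lprod h k₁ b else 0) = 0 := if_neg (fun hy => hv0 hy.2.2.2)
          rw [hL0, zero_mul]
          by_cases hcov : ix b k₁ ⋖ ix a 0
          · rw [if_pos ⟨hb.1, hb.2.1, hb.2.2, ha.1, ha.2.1, ha.2.2, hcov⟩, if_neg hv0]
          · rw [if_neg (fun hy => hcov hy.2.2.2.2.2.2)]
      · have hR0 : (if (PaddedN k₂ a ∧ ChainN k₂ a ∧ IsMax (ix a k₂) ∧ v ⋖ ix a 0)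
            then lprod h k₂ a else 0) = 0 :=
          if_neg (fun hy => ha ⟨hy.1, hy.2.1, hy.2.2.1⟩)
        rw [if_neg (fun hy => ha ⟨hy.2.2.2.1, hy.2.2.2.2.1, hy.2.2.2.2.2.1⟩), hR0, mul_zero]
    · have hL0 : (if (PaddedN k₁ b ∧ ChainN k₁ b ∧ IsMin (ix b 0) ∧ ix b k₁ = v)
          then lprod h k₁ b else 0) = 0 :=
        if_neg (fun hy => hb ⟨hy.1, hy.2.1, hy.2.2.1⟩)
      rw [if_neg (fun hy => hb ⟨hy.1, hy.2.1, hy.2.2.1⟩), hL0, zero_mul]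
  rw [hstep]
  have hY : (∑ k₂ ∈ range (Fintype.card P), ∑ a ∈ (univ : Finset (Fin (Fintype.card P) → P)),
      (if (PaddedN k₂ a ∧ ChainN k₂ a ∧ IsMax (ix a k₂) ∧ v ⋖ ix a 0)
        then lprod h k₂ a else 0))
      = ∑ u ∈ univ.filter (fun u => v ⋖ u), ncDeltaInv h u := by
    have hYa : ∀ (k₂ : ℕ) (a : Fin (Fintype.card P) → P),
        (if (PaddedN k₂ a ∧ ChainN k₂ a ∧ IsMax (ix a k₂) ∧ v ⋖ ix a 0)
          then lprod h k₂ a else 0)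
        = ∑ u ∈ univ.filter (fun u => v ⋖ u),
            (if (PaddedN k₂ a ∧ ChainN k₂ a ∧ ix a 0 = u ∧ IsMax (ix a k₂))
              then lprod h k₂ a else 0) := by
      intro k₂ a
      by_cases ha : PaddedN k₂ a ∧ ChainN k₂ a ∧ IsMax (ix a k₂)
      · have e : ∀ u : P, ((PaddedN k₂ a ∧ ChainN k₂ a ∧ ix a 0 = u ∧ IsMax (ix a k₂)) : Prop)
            ↔ (ix a 0 = u) :=
          fun u => ⟨fun hy => hy.2.2.1, fun hy => ⟨ha.1, ha.2.1, hy, ha.2.2⟩⟩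
        rw [Finset.sum_congr rfl (fun u _ => if_congr (e u) rfl rfl), Finset.sum_ite_eq]
        simp only [Finset.mem_filter, Finset.mem_univ, true_and]
        by_cases hcv : v ⋖ ix a 0
        · rw [if_pos hcv, if_pos ⟨ha.1, ha.2.1, ha.2.2, hcv⟩]
        · rw [if_neg hcv, if_neg (fun hy => hcv hy.2.2.2)]
      · rw [if_neg (fun hy => ha ⟨hy.1, hy.2.1, hy.2.2.1⟩)]
        symm
        exact Finset.sum_eq_zero fun u _ => if_neg (fun hy => ha ⟨hy.1, hy.2.1, hy.2.2.2⟩)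
    rw [Finset.sum_congr rfl fun k₂ _ => Finset.sum_congr rfl fun a _ => hYa k₂ a,
      Finset.sum_congr rfl fun k₂ _ => Finset.sum_comm, Finset.sum_comm]
    refine Finset.sum_congr rfl fun u _ => ?_
    rw [ncDeltaInv_flat h u]
    refine Finset.sum_congr rfl fun k₂ _ => ?_
    rw [Finset.sum_filter]
    rfl
  rw [hY]
  have hfac : ∀ k₁ ∈ range (Fintype.card P),
      (∑ b ∈ (univ : Finset (Fin (Fintype.card P) → P)),
        (if (PaddedN k₁ b ∧ ChainN k₁ b ∧ IsMin (ix b 0) ∧ ix b k₁ = v)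
          then lprod h k₁ b else 0) * (∑ u ∈ univ.filter (fun u => v ⋖ u), ncDeltaInv h u))
      = (∑ b ∈ (univ : Finset (Fin (Fintype.card P) → P)),
          (if (PaddedN k₁ b ∧ ChainN k₁ b ∧ IsMin (ix b 0) ∧ ix b k₁ = v)
            then lprod h k₁ b else 0)) * (∑ u ∈ univ.filter (fun u => v ⋖ u), ncDeltaInv h u) :=
    fun k₁ _ => (Finset.sum_mul _ _ _).symm
  rw [Finset.sum_congr rfl hfac, ← Finset.sum_mul]
  congr 1
  rw [ncNablaInv_flat h v]
  refine Finset.sum_congr rfl fun k₁ _ => ?_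
  rw [Finset.sum_filter]
  rfl

lemma eps_split (h : P → S) (v : P) :
    epsDenom h v
      = (∑ k ∈ range (Fintype.card P),
          ∑ c ∈ univ.filter (fun c : Fin (k+1) → P => MaxChain c),
            (if c (Fin.last k) = v then ((List.ofFn (h ∘ c)).reverse).prod else 0))
        + (∑ k ∈ range (Fintype.card P),
            ∑ c ∈ univ.filter (fun c : Fin (k+1) → P => MaxChain c),
              ∑ j : Fin (k+1), if (c j = v ∧ j.1 ≠ k) then
                (((List.ofFn (h ∘ c)).take (j.1+1)).reverse).prod *
                  (((List.ofFn (h ∘ c)).drop (j.1+1)).reverse).prod else 0) := by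
  unfold epsDenom
  rw [← Finset.sum_add_distrib]
  refine Finset.sum_congr rfl fun k _ => ?_
  rw [← Finset.sum_add_distrib]
  refine Finset.sum_congr rfl fun c _ => ?_
  rw [Finset.sum_filter]
  have e : ∀ j : Fin (k+1), (if c j = v then
      (((List.ofFn (h ∘ c)).take (j.1+1)).reverse).prod *
        (((List.ofFn (h ∘ c)).drop (j.1+1)).reverse).prod else 0)
      = (if (c j = v ∧ j.1 = k) then
          (((List.ofFn (h ∘ c)).take (j.1+1)).reverse).prod *
            (((List.ofFn (h ∘ c)).drop (j.1+1)).reverse).prod else 0)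
        + (if (c j = v ∧ j.1 ≠ k) then
            (((List.ofFn (h ∘ c)).take (j.1+1)).reverse).prod *
              (((List.ofFn (h ∘ c)).drop (j.1+1)).reverse).prod else 0) := by
    intro j
    by_cases h1 : c j = v
    · by_cases h2 : j.1 = k
      · rw [if_pos h1, if_pos ⟨h1, h2⟩, if_neg (fun hy => hy.2 h2), add_zero]
      · rw [if_pos h1, if_neg (fun hy => h2 hy.2), if_pos ⟨h1, h2⟩, zero_add]
    · rw [if_neg h1, if_neg (fun hy => h1 hy.1), if_neg (fun hy => h1 hy.1), add_zero]
  rw [Finset.sum_congr rfl (fun j _ => e j), Finset.sum_add_distrib]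
  congr 1
  rw [Finset.sum_eq_single_of_mem (Fin.last k) (mem_univ _)
    (fun j _ hj => if_neg (fun hy => hj (Fin.ext hy.2)))]
  by_cases h0 : c (Fin.last k) = v
  · rw [if_pos ⟨h0, rfl⟩, if_pos h0]
    rw [List.take_of_length_le (by rw [List.length_ofFn, Fin.val_last]),
      List.drop_eq_nil_of_le (by rw [List.length_ofFn, Fin.val_last])]
    simp
  · rw [if_neg (fun hy => h0 hy.1), if_neg h0]

lemma part0_eq_eps (h : P → S) (v : P) :
    (∑ k ∈ range (Fintype.card P), ∑ c ∈ univ.filter (fun c : Fin (k+1) → P => MaxChain c),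
       (if c (Fin.last k) = v then ((List.ofFn (h ∘ c)).reverse).prod else 0))
    = ncNablaInv h v * (if IsMax v then (1:S) else 0) := by
  by_cases hmax : IsMax v
  · rw [if_pos hmax, mul_one]
    unfold ncNablaInv
    refine Finset.sum_congr rfl fun k _ => ?_
    rw [Finset.sum_filter, Finset.sum_filter]
    refine Finset.sum_congr rfl fun c _ => ?_
    by_cases h1 : SatChain c <;> by_cases h2 : c (Fin.last k) = v <;>
      by_cases h3 : IsMin (c 0) <;>
      simp [MaxChain, h1, h2, h3, hmax]
  · rw [if_neg hmax, mul_zero]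
    refine Finset.sum_eq_zero fun k _ => Finset.sum_eq_zero fun c hcm => ?_
    rw [Finset.mem_filter] at hcm
    exact if_neg (fun h0 : c (Fin.last k) = v => hmax (h0 ▸ hcm.2.2.2))

lemma epsDenom_eq (h : P → S) (v : P) :
    epsDenom h v = ncNablaInv h v *
      ((if IsMax v then (1:S) else 0)
        + ∑ u ∈ univ.filter (fun u => v ⋖ u), ncDeltaInv h u) := by
  rw [eps_split h v, part0_eq_eps h v, part1_eq_eps h v, master (epsF h v), part1_rhs_eps h v,
    mul_add]

end L4

lemma covby_not_le {a b v : P} (ha : a ⋖ v) (hb : b ⋖ v) (hab : a ≠ b) : ¬ a ≤ b := by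
  intro hle
  exact ha.2 (lt_of_le_of_ne hle hab) hb.1

section Loc
variable [Nonempty P]

lemma uvT_congr {h h' : P → S} {x : P} (hle : ∀ y, x < y → h y = h' y) :
    (if IsMax x then (1:S) else 0) + ∑ u ∈ univ.filter (fun u => x ⋖ u), ncDeltaInv h u
      = (if IsMax x then (1:S) else 0) + ∑ u ∈ univ.filter (fun u => x ⋖ u), ncDeltaInv h' u := by
  congr 1
  refine Finset.sum_congr rfl fun u hu => ?_
  rw [Finset.mem_filter] at hu
  exact ncDeltaInv_congr (fun y hy => hle y (lt_of_lt_of_le hu.2.lt hy))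

lemma lsum_nabla_congr {h h' : P → S} {x : P} (hle : ∀ y, y < x → h y = h' y) :
    lSum (ncNablaInv h) x = lSum (ncNablaInv h') x := by
  unfold lSum
  congr 1
  refine Finset.sum_congr rfl fun u hu => ?_
  rw [Finset.mem_filter] at hu
  exact ncNablaInv_congr (fun y hy => hle y (lt_of_le_of_lt hy hu.2.lt))

lemma tauDenom_congr {h h' : P → S} {x : P} (h1 : ∀ y, y < x → h y = h' y)
    (h2 : ∀ y, x ≤ y → h y = h' y) : tauDenom h x = tauDenom h' x := by
  rw [tauDenom_eq, tauDenom_eq, lsum_nabla_congr h1, ncDeltaInv_congr h2]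

lemma epsDenom_congr {h h' : P → S} {x : P} (h1 : ∀ y, y ≤ x → h y = h' y)
    (h2 : ∀ y, x < y → h y = h' y) : epsDenom h x = epsDenom h' x := by
  rw [epsDenom_eq, epsDenom_eq, ncNablaInv_congr h1, uvT_congr h2]

lemma applyNCTaus_covers (C : S) (v : P) :
    ∀ (l : List P) (g : P → S), l.Nodup → (∀ y ∈ l, y ⋖ v) →
      (applyNCTaus C l g = fun x => if x ∈ l then C * (tauDenom g x)⁻¹ else g x)
      ∧ (ncTausDef C l g → ∀ y ∈ l, tauDenom g y ≠ 0) := by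
  intro l
  induction l with
  | nil =>
    intro g _ _
    exact ⟨by funext x; simp [applyNCTaus], fun _ y hy => absurd hy List.not_mem_nil⟩
  | cons a l ih =>
    intro g hnd hcov
    have ha : a ⋖ v := hcov a List.mem_cons_self
    have hnd' : l.Nodup := (List.nodup_cons.1 hnd).2
    have hanl : a ∉ l := (List.nodup_cons.1 hnd).1
    have hcov' : ∀ y ∈ l, y ⋖ v := fun y hy => hcov y (List.mem_cons_of_mem a hy)
    have hstep : applyNCTaus C (a :: l) g = applyNCTaus C l (ncTau C a g) := rfl
    obtain ⟨ih1, ih2⟩ := ih (ncTau C a g) hnd' hcov'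
    have hne : ∀ x ∈ l, ∀ y : P, y = a → ¬ (y ≤ x ∨ x ≤ y) := by
      rintro x hx y rfl
      have hax : y ≠ x := fun he => hanl (he ▸ hx)
      rintro (hle | hle)
      · exact covby_not_le ha (hcov' x hx) hax hle
      · exact covby_not_le (hcov' x hx) ha (Ne.symm hax) hle
    have htd : ∀ x ∈ l, tauDenom (ncTau C a g) x = tauDenom g x := by
      intro x hx
      refine tauDenom_congr (fun y hy => ?_) (fun y hy => ?_)
      · show (if y = a then C * (tauDenom g a)⁻¹ else g y) = g y
        rw [if_neg (fun he => hne x hx y he (Or.inl hy.le))]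
      · show (if y = a then C * (tauDenom g a)⁻¹ else g y) = g y
        rw [if_neg (fun he => hne x hx y he (Or.inr hy))]
    constructor
    · rw [hstep, ih1]
      funext x
      by_cases hx : x ∈ l
      · rw [if_pos hx, if_pos (List.mem_cons_of_mem a hx), htd x hx]
      · rw [if_neg hx]
        by_cases hxa : x = a
        · subst hxa
          rw [if_pos List.mem_cons_self]
          show (if x = x then C * (tauDenom g x)⁻¹ else g x) = _
          rw [if_pos rfl]
        · rw [if_neg (by simp [hxa, hx])]
          show (if x = a then C * (tauDenom g a)⁻¹ else g x) = g x
          rw [if_neg hxa]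
    · intro hdef y hy
      rcases List.mem_cons.1 hy with rfl|hy'
      · exact hdef.1
      · have := ih2 hdef.2 y hy'
        rwa [htd y hy'] at this

lemma applyNCEpss_covers (C : S) (v : P) :
    ∀ (l : List P) (g : P → S), l.Nodup → (∀ y ∈ l, y ⋖ v) →
      (applyNCEpss C l g = fun x => if x ∈ l then C * (epsDenom g x)⁻¹ else g x)
      ∧ (ncEpssDef C l g → ∀ y ∈ l, epsDenom g y ≠ 0) := by
  intro l
  induction l with
  | nil =>
    intro g _ _
    exact ⟨by funext x; simp [applyNCEpss], fun _ y hy => absurd hy List.not_mem_nil⟩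
  | cons a l ih =>
    intro g hnd hcov
    have ha : a ⋖ v := hcov a List.mem_cons_self
    have hnd' : l.Nodup := (List.nodup_cons.1 hnd).2
    have hanl : a ∉ l := (List.nodup_cons.1 hnd).1
    have hcov' : ∀ y ∈ l, y ⋖ v := fun y hy => hcov y (List.mem_cons_of_mem a hy)
    have hstep : applyNCEpss C (a :: l) g = applyNCEpss C l (ncEps C a g) := rfl
    obtain ⟨ih1, ih2⟩ := ih (ncEps C a g) hnd' hcov'
    have hne : ∀ x ∈ l, ∀ y : P, y = a → ¬ (y ≤ x ∨ x ≤ y) := by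
      rintro x hx y rfl
      have hax : y ≠ x := fun he => hanl (he ▸ hx)
      rintro (hle | hle)
      · exact covby_not_le ha (hcov' x hx) hax hle
      · exact covby_not_le (hcov' x hx) ha (Ne.symm hax) hle
    have htd : ∀ x ∈ l, epsDenom (ncEps C a g) x = epsDenom g x := by
      intro x hx
      refine epsDenom_congr (fun y hy => ?_) (fun y hy => ?_)
      · show (if y = a then C * (epsDenom g a)⁻¹ else g y) = g y
        rw [if_neg (fun he => hne x hx y he (Or.inl hy))]
      · show (if y = a then C * (epsDenom g a)⁻¹ else g y) = g y
        rw [if_neg (fun he => hne x hx y he (Or.inr hy.le))]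
    constructor
    · rw [hstep, ih1]
      funext x
      by_cases hx : x ∈ l
      · rw [if_pos hx, if_pos (List.mem_cons_of_mem a hx), htd x hx]
      · rw [if_neg hx]
        by_cases hxa : x = a
        · subst hxa
          rw [if_pos List.mem_cons_self]
          show (if x = x then C * (epsDenom g x)⁻¹ else g x) = _
          rw [if_pos rfl]
        · rw [if_neg (by simp [hxa, hx])]
          show (if x = a then C * (epsDenom g a)⁻¹ else g x) = g x
          rw [if_neg hxa]
    · intro hdef y hy
      rcases List.mem_cons.1 hy with rfl|hy'
      · exact hdef.1
      · have := ih2 hdef.2 y hy'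
        rwa [htd y hy'] at this

end Loc

lemma ncTausDef_append (C : S) : ∀ (l₁ l₂ : List P) (g : P → S),
    ncTausDef C (l₁ ++ l₂) g ↔ ncTausDef C l₁ g ∧ ncTausDef C l₂ (applyNCTaus C l₁ g) := by
  intro l₁
  induction l₁ with
  | nil => intro l₂ g; simp [ncTausDef, applyNCTaus]
  | cons a l ih =>
    intro l₂ g
    show (tauDenom g a ≠ 0 ∧ ncTausDef C (l ++ l₂) (ncTau C a g)) ↔
      (tauDenom g a ≠ 0 ∧ ncTausDef C l (ncTau C a g)) ∧
        ncTausDef C l₂ (applyNCTaus C (a :: l) g)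
    rw [ih]
    have he : applyNCTaus C (a :: l) g = applyNCTaus C l (ncTau C a g) := rfl
    rw [he]
    tauto

section Alg
variable {C : S}

lemma alg_comm_inv (hC : ∀ s : S, C * s = s * C) (hC0 : C ≠ 0) (s : S) :
    C⁻¹ * s = s * C⁻¹ := by
  calc C⁻¹ * s = C⁻¹ * s * C * C⁻¹ := by
        rw [mul_assoc (C⁻¹ * s), mul_inv_cancel₀ hC0, mul_one]
    _ = C⁻¹ * (C * s) * C⁻¹ := by rw [mul_assoc C⁻¹ s C, ← hC s]
    _ = s * C⁻¹ := by rw [← mul_assoc, inv_mul_cancel₀ hC0, one_mul]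

lemma alg_mid (hC : ∀ s : S, C * s = s * C) (hC0 : C ≠ 0) {W X : S} (hW : W ≠ 0) :
    W * (C * (C * X⁻¹ * W)⁻¹) = X := by
  rw [mul_inv_rev, mul_inv_rev, inv_inv]
  rw [hC (W⁻¹ * (X * C⁻¹))]
  rw [mul_assoc W⁻¹ (X * C⁻¹) C, mul_assoc X C⁻¹ C, inv_mul_cancel₀ hC0, mul_one,
    ← mul_assoc, mul_inv_cancel₀ hW, one_mul]

lemma alg_T (hC : ∀ s : S, C * s = s * C) (hC0 : C ≠ 0) (A Dv U : S) :
    C * (U * (C * (A * Dv)⁻¹))⁻¹ = A * (C * Dv⁻¹)⁻¹ * (U * C⁻¹)⁻¹ := by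
  have hlhs : C * (U * (C * (A * Dv)⁻¹))⁻¹ = A * Dv * U⁻¹ := by
    rw [mul_inv_rev U, mul_inv_rev C, inv_inv]
    rw [hC (A * Dv * C⁻¹ * U⁻¹)]
    rw [mul_assoc (A * Dv * C⁻¹) U⁻¹ C, ← hC U⁻¹, mul_assoc (A * Dv) C⁻¹ (C * U⁻¹),
      ← mul_assoc C⁻¹ C U⁻¹, inv_mul_cancel₀ hC0, one_mul]
  have hrhs : A * (C * Dv⁻¹)⁻¹ * (U * C⁻¹)⁻¹ = A * Dv * U⁻¹ := by
    rw [mul_inv_rev C Dv⁻¹, inv_inv, mul_inv_rev U C⁻¹, inv_inv]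
    rw [← mul_assoc A Dv C⁻¹, mul_assoc (A * Dv) C⁻¹ (C * U⁻¹),
      ← mul_assoc C⁻¹ C U⁻¹, inv_mul_cancel₀ hC0, one_mul]
  rw [hlhs, hrhs]

lemma alg_E (hC : ∀ s : S, C * s = s * C) (hC0 : C ≠ 0) {U : S} (A Gv : S) (hU : U ≠ 0) :
    C * (U * (C * (Gv * A * U)⁻¹))⁻¹ = (U * C⁻¹)⁻¹ * (C * (U * Gv)⁻¹)⁻¹ * A := by
  have hlhs : C * (U * (C * (Gv * A * U)⁻¹))⁻¹ = Gv * A := by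
    rw [mul_inv_rev U, mul_inv_rev C, inv_inv]
    rw [hC (Gv * A * U * C⁻¹ * U⁻¹)]
    rw [mul_assoc (Gv * A * U * C⁻¹) U⁻¹ C, ← hC U⁻¹, mul_assoc (Gv * A * U) C⁻¹ (C * U⁻¹),
      ← mul_assoc C⁻¹ C U⁻¹, inv_mul_cancel₀ hC0, one_mul,
      mul_assoc (Gv * A) U U⁻¹, mul_inv_cancel₀ hU, mul_one]
  have hrhs : (U * C⁻¹)⁻¹ * (C * (U * Gv)⁻¹)⁻¹ * A = Gv * A := by
    rw [mul_inv_rev U C⁻¹, inv_inv, mul_inv_rev C ((U * Gv)⁻¹), inv_inv]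
    rw [mul_assoc C U⁻¹ (U * Gv * C⁻¹), ← mul_assoc U⁻¹ (U * Gv) C⁻¹,
      ← mul_assoc U⁻¹ U Gv, inv_mul_cancel₀ hU, one_mul,
      ← mul_assoc C Gv C⁻¹, hC Gv, mul_assoc Gv C C⁻¹, mul_inv_cancel₀ hC0, mul_one]
  rw [hlhs, hrhs]

end Alg

lemma uInvSum_theta [Nonempty P] (C : S) (g : P → S) (v : P) :
    uInvSum C (ncTheta C (ncDeltaInv g)) v
      = ((if IsMax v then (1:S) else 0)
          + ∑ u ∈ univ.filter (fun u => v ⋖ u), ncDeltaInv g u) * C⁻¹ := by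
  unfold uInvSum ncTheta
  rw [add_mul]
  congr 1
  · by_cases hm : IsMax v <;> simp [hm]
  · rw [Finset.sum_mul]
    refine Finset.sum_congr rfl fun u _ => ?_
    rw [mul_inv_rev, inv_inv]


/-- Let `v ∈ P` and let `lc = (v₁,…,v_k)` list the elements of `P`
covered by `v`.  Define
`T_v* = ε_{v₁} ∘ ε_{v₂} ∘ ⋯ ∘ ε_{v_k} ∘ τ_v ∘ τ_{v_k} ∘ ⋯ ∘ τ_{v₂} ∘ τ_{v₁}` and
`E_v* = ε_{v₁} ∘ ε_{v₂} ∘ ⋯ ∘ ε_{v_k} ∘ ε_v ∘ τ_{v_k} ∘ ⋯ ∘ τ_{v₂} ∘ τ_{v₁}` (so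
`T_v* = τ_v` and `E_v* = ε_v` when `v` is minimal).  Then
`Θ ∘ Δ⁻¹ ∘ T_v* = T_v ∘ Θ ∘ Δ⁻¹` and `Θ ∘ Δ⁻¹ ∘ E_v* = E_v ∘ Θ ∘ Δ⁻¹`, on all
`S`-labelings for which both sides are defined.  (Below, `T_v* g` is realized by
applying `τ_{v₁},…,τ_{v_k}` then `τ_v` — i.e. the `τ`'s along `lc ++ [v]` — and then
`ε_{v_k},…,ε_{v₁}` — i.e. the `ε`'s along `lc.reverse`; and similarly for `E_v* g`.) -/
theorem theta_deltaInv_ncTstar_ncEstar (C : S) (hC : ∀ s : S, C * s = s * C) (v : P)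
    (lc : List P) (hlc : lc.Nodup ∧ ∀ y : P, y ∈ lc ↔ y ⋖ v) (g : P → S) :
    (ncTausDef C (lc ++ [v]) g →
     ncEpssDef C lc.reverse (applyNCTaus C (lc ++ [v]) g) →
     (∀ x : P,
        ncDeltaInv (applyNCEpss C lc.reverse (applyNCTaus C (lc ++ [v]) g)) x ≠ 0) →
     (∀ x : P, ncDeltaInv g x ≠ 0) →
     ncODef C v (ncTheta C (ncDeltaInv g)) →
      ncTheta C (ncDeltaInv (applyNCEpss C lc.reverse (applyNCTaus C (lc ++ [v]) g)))
        = ncT C v (ncTheta C (ncDeltaInv g))) ∧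
    (ncTausDef C lc g →
     ncEpssDef C (v :: lc.reverse) (applyNCTaus C lc g) →
     (∀ x : P,
        ncDeltaInv (applyNCEpss C lc.reverse (ncEps C v (applyNCTaus C lc g))) x ≠ 0) →
     (∀ x : P, ncDeltaInv g x ≠ 0) →
     ncODef C v (ncTheta C (ncDeltaInv g)) →
      ncTheta C (ncDeltaInv (applyNCEpss C lc.reverse (ncEps C v (applyNCTaus C lc g))))
        = ncE C v (ncTheta C (ncDeltaInv g))) := by
  classical
  haveI hne : Nonempty P := ⟨v⟩
  obtain ⟨hnd, hmem⟩ := hlc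
  have hcov : ∀ y ∈ lc, y ⋖ v := fun y hy => (hmem y).1 hy
  have hvlc : v ∉ lc := fun hv => absurd ((hmem v).1 hv).lt (lt_irrefl v)
  have hkfun : applyNCTaus C lc g = fun x => if x ∈ lc then C * (tauDenom g x)⁻¹ else g x :=
    (applyNCTaus_covers C v lc g hnd hcov).1
  have hkg : ∀ x, x ∉ lc → applyNCTaus C lc g x = g x := by
    intro x hx; rw [hkfun]; exact if_neg hx
  have hku : ∀ u ∈ lc, applyNCTaus C lc g u = C * (tauDenom g u)⁻¹ := by
    intro u hu; rw [hkfun]; exact if_pos hu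
  set U : S := (if IsMax v then (1:S) else 0)
      + ∑ u ∈ univ.filter (fun u => v ⋖ u), ncDeltaInv g u with hUdef
  have hUinv : uInvSum C (ncTheta C (ncDeltaInv g)) v = U * C⁻¹ := uInvSum_theta C g v
  -- first: N(hk) at lower covers
  have hNk : (∀ u ∈ lc, tauDenom g u ≠ 0) →
      ∀ u ∈ lc, ncNablaInv (applyNCTaus C lc g) u = C * (ncDeltaInv g u)⁻¹ := by
    intro htg u hu
    have huv : u ⋖ v := hcov u hu
    rw [ncNablaInv_rec (applyNCTaus C lc g) u]
    have h2 : lSum (ncNablaInv (applyNCTaus C lc g)) u = lSum (ncNablaInv g) u := by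
      refine lsum_nabla_congr fun y hy => ?_
      refine hkg y (fun hyl => ?_)
      exact covby_not_le (hcov y hyl) huv (ne_of_lt hy) hy.le
    rw [h2, hku u hu, tauDenom_eq g u]
    have hLD := mul_ne_zero_iff.1 (by rw [← tauDenom_eq g u]; exact htg u hu)
    rw [mul_inv_rev, mul_assoc C, mul_assoc ((ncDeltaInv g u)⁻¹),
      inv_mul_cancel₀ hLD.1, mul_one]
  have hLk : (∀ u ∈ lc, tauDenom g u ≠ 0) →
      lSum (ncNablaInv (applyNCTaus C lc g)) v = lSum (ncTheta C (ncDeltaInv g)) v := by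
    intro htg
    unfold lSum
    congr 1
    refine Finset.sum_congr rfl fun u hu => ?_
    rw [Finset.mem_filter] at hu
    rw [hNk htg u ((hmem u).2 hu.2)]
    rfl
  -- the generic toggle-at-v computation
  have gen : ∀ (t : S) (hp : P → S), hp = (fun x => if x = v then t else applyNCTaus C lc g x) →
      ncEpssDef C lc.reverse hp → C ≠ 0 → (∀ x : P, ncDeltaInv g x ≠ 0) →
      (∀ u ∈ lc, tauDenom g u ≠ 0) →
      (∀ x : P, x ≠ v → ncDeltaInv (applyNCEpss C lc.reverse hp) x = ncDeltaInv g x)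
        ∧ ncDeltaInv (applyNCEpss C lc.reverse hp) v = U * t := by
    intro t hp hpdef hEdef hC0 hDnz htg
    have hndr : lc.reverse.Nodup := List.nodup_reverse.2 hnd
    have hcovr : ∀ y ∈ lc.reverse, y ⋖ v := fun y hy => hcov y (List.mem_reverse.1 hy)
    obtain ⟨hFfun, hFnz⟩ := applyNCEpss_covers C v lc.reverse hp hndr hcovr
    have hFx : ∀ x, x ∉ lc → applyNCEpss C lc.reverse hp x = hp x := by
      intro x hx; rw [hFfun]; exact if_neg (fun h => hx (List.mem_reverse.1 h))
    have hFu : ∀ u ∈ lc, applyNCEpss C lc.reverse hp u = C * (epsDenom hp u)⁻¹ := by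
      intro u hu; rw [hFfun]; exact if_pos (List.mem_reverse.2 hu)
    have hpx : ∀ x, x ≠ v → hp x = applyNCTaus C lc g x := by
      intro x hx; rw [hpdef]; exact if_neg hx
    have hpv : hp v = t := by rw [hpdef]; exact if_pos rfl
    have hFg : ∀ y, y ∉ lc → y ≠ v → applyNCEpss C lc.reverse hp y = g y := fun y h1 h2 => by
      rw [hFx y h1, hpx y h2, hkg y h1]
    have hDFu : ∀ u ∈ lc, ncDeltaInv (applyNCEpss C lc.reverse hp) u = ncDeltaInv g u := by
      intro u hu
      have huv : u ⋖ v := hcov u hu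
      rw [ncDeltaInv_rec (applyNCEpss C lc.reverse hp) u]
      have hNu : ncNablaInv hp u = C * (ncDeltaInv g u)⁻¹ := by
        have h1 : ncNablaInv hp u = ncNablaInv (applyNCTaus C lc g) u := by
          refine ncNablaInv_congr fun y hy => ?_
          exact hpx y (fun he => absurd (he ▸ hy) (not_le_of_gt huv.lt))
        rw [h1]
        exact hNk htg u hu
      have hUW : (if IsMax u then (1:S) else 0)
            + ∑ w ∈ univ.filter (fun w => u ⋖ w), ncDeltaInv hp w
          = (if IsMax u then (1:S) else 0)
            + ∑ w ∈ univ.filter (fun w => u ⋖ w),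
                ncDeltaInv (applyNCEpss C lc.reverse hp) w := by
        congr 1
        refine Finset.sum_congr rfl fun w hw => ?_
        rw [Finset.mem_filter] at hw
        refine ncDeltaInv_congr fun y hy => ?_
        by_cases hyl : y ∈ lc
        · exfalso
          have huy : u < y := lt_of_lt_of_le hw.2.lt hy
          exact covby_not_le huv (hcov y hyl) (ne_of_lt huy) huy.le
        · exact (hFx y hyl).symm
      have hED : epsDenom hp u = C * (ncDeltaInv g u)⁻¹ *
          ((if IsMax u then (1:S) else 0)
            + ∑ w ∈ univ.filter (fun w => u ⋖ w),
                ncDeltaInv (applyNCEpss C lc.reverse hp) w) := by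
        rw [epsDenom_eq hp u, hNu, hUW]
      have hEDnz : epsDenom hp u ≠ 0 := hFnz hEdef u (List.mem_reverse.2 hu)
      have hWnz : ((if IsMax u then (1:S) else 0)
          + ∑ w ∈ univ.filter (fun w => u ⋖ w),
              ncDeltaInv (applyNCEpss C lc.reverse hp) w) ≠ 0 :=
        (mul_ne_zero_iff.1 (hED ▸ hEDnz)).2
      rw [hFu u hu, hED]
      exact alg_mid hC hC0 hWnz
    have hDFv : ncDeltaInv (applyNCEpss C lc.reverse hp) v = U * t := by
      rw [ncDeltaInv_rec (applyNCEpss C lc.reverse hp) v]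
      have hs : ∑ u ∈ univ.filter (fun u => v ⋖ u),
          ncDeltaInv (applyNCEpss C lc.reverse hp) u
          = ∑ u ∈ univ.filter (fun u => v ⋖ u), ncDeltaInv g u := by
        refine Finset.sum_congr rfl fun u hu => ?_
        rw [Finset.mem_filter] at hu
        refine ncDeltaInv_congr fun y hy => ?_
        have hyv : v < y := lt_of_lt_of_le hu.2.lt hy
        refine hFg y (fun hyl => ?_) (fun he => absurd (he ▸ hyv) (lt_irrefl v))
        exact absurd (lt_trans (hcov y hyl).lt hyv) (lt_irrefl y)
      have hFv : applyNCEpss C lc.reverse hp v = t := by rw [hFx v hvlc, hpv]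
      rw [hs, hFv, ← hUdef]
    refine ⟨?_, hDFv⟩
    have wf : WellFounded ((· > ·) : P → P → Prop) := wellFounded_gt
    intro x
    refine wf.induction (C := fun x => x ≠ v → ncDeltaInv (applyNCEpss C lc.reverse hp) x
      = ncDeltaInv g x) x ?_
    intro z ih hzv
    by_cases hzl : z ∈ lc
    · exact hDFu z hzl
    · rw [ncDeltaInv_rec (applyNCEpss C lc.reverse hp) z, ncDeltaInv_rec g z]
      congr 1
      · congr 1
        refine Finset.sum_congr rfl fun w hw => ?_
        rw [Finset.mem_filter] at hw
        by_cases hwl : w ∈ lc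
        · exact hDFu w hwl
        · exact ih w hw.2.lt (fun he => hzl ((hmem z).2 (he ▸ hw.2)))
      · exact hFg z hzl hzv
  constructor
  · -- T part
    intro hTdef hEdef hnzF hnzD hOD
    have hC0 : C ≠ 0 := by
      intro h0
      apply hOD.2.2.2
      unfold uInvSum ncTheta
      subst h0
      simp
    have htg : ∀ u ∈ lc, tauDenom g u ≠ 0 :=
      (applyNCTaus_covers C v lc g hnd hcov).2 ((ncTausDef_append C lc [v] g).1 hTdef).1
    have happ : applyNCTaus C (lc ++ [v]) g = ncTau C v (applyNCTaus C lc g) := by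
      show List.foldl _ g (lc ++ [v]) = _
      rw [List.foldl_append]
      rfl
    rw [happ] at hEdef ⊢
    have htauv : tauDenom (applyNCTaus C lc g) v
        = lSum (ncTheta C (ncDeltaInv g)) v * ncDeltaInv g v := by
      rw [tauDenom_eq (applyNCTaus C lc g) v, hLk htg]
      congr 1
      refine ncDeltaInv_congr fun y hy => ?_
      refine hkg y (fun hyl => ?_)
      exact absurd (lt_of_lt_of_le (hcov y hyl).lt hy) (lt_irrefl y)
    obtain ⟨hDx, hDv⟩ := gen (C * (tauDenom (applyNCTaus C lc g) v)⁻¹)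
      (ncTau C v (applyNCTaus C lc g)) rfl hEdef hC0 hnzD htg
    funext x
    show C * (ncDeltaInv (applyNCEpss C lc.reverse (ncTau C v (applyNCTaus C lc g))) x)⁻¹ = _
    unfold ncT
    by_cases hx : x = v
    · subst hx
      rw [if_pos rfl, hDv, htauv, hUinv]
      show C * (U * (C * (lSum (ncTheta C (ncDeltaInv g)) x * ncDeltaInv g x)⁻¹))⁻¹ = _
      rw [alg_T hC hC0 (lSum (ncTheta C (ncDeltaInv g)) x) (ncDeltaInv g x) U]
      rfl
    · rw [if_neg hx, hDx x hx]
      rfl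
  · -- E part
    intro hTdef hEdef hnzF hnzD hOD
    have hC0 : C ≠ 0 := by
      intro h0
      apply hOD.2.2.2
      unfold uInvSum ncTheta
      subst h0
      simp
    have hU0 : U ≠ 0 := by
      intro h0
      apply hOD.2.2.2
      rw [hUinv, h0, zero_mul]
    have htg : ∀ u ∈ lc, tauDenom g u ≠ 0 :=
      (applyNCTaus_covers C v lc g hnd hcov).2 hTdef
    have hepsv : epsDenom (applyNCTaus C lc g) v
        = g v * lSum (ncTheta C (ncDeltaInv g)) v * U := by
      rw [epsDenom_eq (applyNCTaus C lc g) v, ncNablaInv_rec (applyNCTaus C lc g) v,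
        hkg v hvlc, hLk htg]
      congr 1
      rw [hUdef]
      refine uvT_congr fun y hy => ?_
      refine hkg y (fun hyl => ?_)
      exact absurd (lt_trans (hcov y hyl).lt hy) (lt_irrefl y)
    obtain ⟨hDx, hDv⟩ := gen (C * (epsDenom (applyNCTaus C lc g) v)⁻¹)
      (ncEps C v (applyNCTaus C lc g)) rfl hEdef.2 hC0 hnzD htg
    funext x
    show C * (ncDeltaInv (applyNCEpss C lc.reverse (ncEps C v (applyNCTaus C lc g))) x)⁻¹ = _
    unfold ncE
    by_cases hx : x = v
    · subst hx
      rw [if_pos rfl, hDv, hepsv, hUinv]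
      show C * (U * (C * (g x * lSum (ncTheta C (ncDeltaInv g)) x * U)⁻¹))⁻¹ = _
      rw [alg_E hC hC0 (lSum (ncTheta C (ncDeltaInv g)) x) (g x) hU0]
      have hDvx : ncDeltaInv g x = U * g x := ncDeltaInv_rec g x
      show _ = (U * C⁻¹)⁻¹ * (C * (ncDeltaInv g x)⁻¹)⁻¹ * lSum (ncTheta C (ncDeltaInv g)) x
      rw [hDvx]
    · rw [if_neg hx, hDx x hx]
      rfl
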